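/- arXiv:1807.08950 — 6 statements merged into one kernel-verified Lean document; each statement's English description precedes it below -/
import Mathlib

section
/- Let X and U be Banach spaces, p ∈ [1,∞) ∪ {∞}, and 𝒰 := L^p([0,∞),U) with ‖·‖_𝒰 = ‖·‖_{L^p}. Let (T_t)_{t≥0} be a C₀-semigroup on X and let Φ : [0,∞) × 𝒰 → X be such that each Φ_t : 𝒰 → X is linear, t ↦ Φ_t(u) is continuous for each u ∈ 𝒰, and φ(t,x₀,u) := T_t x₀ + Φ_t(u) defines a dynamical system with inputs 𝔖 := (X,𝒰,φ) (i.e., φ is cocyclic and causal). Then 𝔖 is weakly input-to-state stable if and only if 𝔖 is strongly input-to-state stable. -/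
open MeasureTheory Filter Set Topology
open scoped ENNReal NNReal

noncomputable section

/-- The class `𝒦` of comparison functions: continuous, strictly increasing functions
`γ : [0,∞) → [0,∞)` with `γ 0 = 0` (modelled on `ℝ` via conditions on `Ici 0`). -/
def ClassK (γ : ℝ → ℝ) : Prop :=
  ContinuousOn γ (Ici 0) ∧ StrictMonoOn γ (Ici 0) ∧ γ 0 = 0 ∧ ∀ r : ℝ, 0 ≤ r → 0 ≤ γ r

/-- The class `𝒦 ∪ {0}`. -/
def ClassKZero (γ : ℝ → ℝ) : Prop := ClassK γ ∨ ∀ r : ℝ, γ r = 0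

/-- The class `ℒ` of comparison functions: continuous, strictly decreasing functions
`β : [0,∞) → [0,∞)` with `β r → 0` as `r → ∞`. -/
def ClassL (β : ℝ → ℝ) : Prop :=
  ContinuousOn β (Ici 0) ∧ StrictAntiOn β (Ici 0) ∧ (∀ r : ℝ, 0 ≤ r → 0 ≤ β r) ∧
    Tendsto β atTop (nhds 0)

/-- A (forward-complete) dynamical system with inputs `𝔖 = (X, 𝒰, φ)`. Inputs are
functions `u : ℝ → U` (only the values on `[0,∞)` matter), `inNorm` is the norm `‖·‖_𝒰`. -/
structure DynSysWithInputs (X : Type*) [NormedAddCommGroup X] (U : Type*) where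
  inputs : Set (ℝ → U)
  inputs_nonempty : inputs.Nonempty
  inNorm : (ℝ → U) → ℝ
  inNorm_nonneg : ∀ u ∈ inputs, 0 ≤ inNorm u
  flow : ℝ → X → (ℝ → U) → X
  shift_mem : ∀ u ∈ inputs, ∀ τ : ℝ, 0 ≤ τ → (fun s => u (s + τ)) ∈ inputs
  shift_norm_le : ∀ u ∈ inputs, ∀ τ : ℝ, 0 ≤ τ → inNorm (fun s => u (s + τ)) ≤ inNorm u
  concat_mem : ∀ u₁ ∈ inputs, ∀ u₂ ∈ inputs, ∀ τ : ℝ, 0 ≤ τ →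
    (fun s => if s < τ then u₁ s else u₂ (s - τ)) ∈ inputs
  flow_zero : ∀ (x₀ : X), ∀ u ∈ inputs, flow 0 x₀ u = x₀
  cocycle : ∀ (x₀ : X), ∀ u ∈ inputs, ∀ s t : ℝ, 0 ≤ s → 0 ≤ t →
    flow (t + s) x₀ u = flow t (flow s x₀ u) (fun r => u (r + s))
  flow_continuous : ∀ (x₀ : X), ∀ u ∈ inputs, ContinuousOn (fun t => flow t x₀ u) (Ici 0)
  causal : ∀ (x₀ : X), ∀ u₁ ∈ inputs, ∀ u₂ ∈ inputs, ∀ τ : ℝ, 0 ≤ τ →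
    (∀ s ∈ Icc (0:ℝ) τ, u₁ s = u₂ s) → ∀ t ∈ Icc (0:ℝ) τ, flow t x₀ u₁ = flow t x₀ u₂

variable {X U : Type*} [NormedAddCommGroup X]

/-- Uniform global stability with explicit gains `σ`, `γ`. -/
def UGSWith (S : DynSysWithInputs X U) (σ γ : ℝ → ℝ) : Prop :=
  ∀ (x₀ : X), ∀ u ∈ S.inputs, ∀ t : ℝ, 0 ≤ t →
    ‖S.flow t x₀ u‖ ≤ σ ‖x₀‖ + γ (S.inNorm u)

/-- Uniform global stability. -/
def UGS (S : DynSysWithInputs X U) : Prop :=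
  ∃ σ γ : ℝ → ℝ, ClassK σ ∧ ClassK γ ∧ UGSWith S σ γ

/-- The weak asymptotic gain property with gain `γ`. -/
def WeakAGWith (S : DynSysWithInputs X U) (γ : ℝ → ℝ) : Prop :=
  ∀ ε : ℝ, 0 < ε → ∀ (x₀ : X), ∀ u ∈ S.inputs, ∃ τ : ℝ, 0 ≤ τ ∧
    ∀ t : ℝ, τ ≤ t → ‖S.flow t x₀ u‖ ≤ ε + γ (S.inNorm u)

/-- The weak asymptotic gain property (for some gain in `𝒦 ∪ {0}`). -/
def WeakAG (S : DynSysWithInputs X U) : Prop :=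
  ∃ γ : ℝ → ℝ, ClassKZero γ ∧ WeakAGWith S γ

/-- The strong asymptotic gain property with gain `γ`. -/
def StrongAGWith (S : DynSysWithInputs X U) (γ : ℝ → ℝ) : Prop :=
  ∀ ε : ℝ, 0 < ε → ∀ (x₀ : X), ∃ τ : ℝ, 0 ≤ τ ∧
    ∀ t : ℝ, τ ≤ t → ∀ u ∈ S.inputs, ‖S.flow t x₀ u‖ ≤ ε + γ (S.inNorm u)

/-- The strong asymptotic gain property. -/
def StrongAG (S : DynSysWithInputs X U) : Prop :=
  ∃ γ : ℝ → ℝ, ClassKZero γ ∧ StrongAGWith S γ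

/-- The uniform asymptotic gain property with gain `γ`. -/
def UniformAGWith (S : DynSysWithInputs X U) (γ : ℝ → ℝ) : Prop :=
  ∀ ε : ℝ, 0 < ε → ∀ r : ℝ, 0 < r → ∃ τ : ℝ, 0 ≤ τ ∧
    ∀ t : ℝ, τ ≤ t → ∀ (x₀ : X), ‖x₀‖ ≤ r → ∀ u ∈ S.inputs,
      ‖S.flow t x₀ u‖ ≤ ε + γ (S.inNorm u)

/-- The uniform asymptotic gain property. -/
def UniformAG (S : DynSysWithInputs X U) : Prop :=
  ∃ γ : ℝ → ℝ, ClassKZero γ ∧ UniformAGWith S γ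

/-- The weak limit property with gain `γ`. -/
def WeakLimitWith (S : DynSysWithInputs X U) (γ : ℝ → ℝ) : Prop :=
  ∀ ε : ℝ, 0 < ε → ∀ (x₀ : X), ∀ u ∈ S.inputs, ∃ τ : ℝ, 0 ≤ τ ∧
    sInf ((fun t => ‖S.flow t x₀ u‖) '' Icc (0:ℝ) τ) ≤ ε + γ (S.inNorm u)

/-- The weak limit property. -/
def WeakLimit (S : DynSysWithInputs X U) : Prop :=
  ∃ γ : ℝ → ℝ, ClassK γ ∧ WeakLimitWith S γ

/-- Weak input-to-state stability. -/
def WeakISS (S : DynSysWithInputs X U) : Prop := UGS S ∧ WeakAG S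

/-- Strong input-to-state stability. -/
def StrongISS (S : DynSysWithInputs X U) : Prop := UGS S ∧ StrongAG S

/-- Uniform input-to-state stability. -/
def UniformISS (S : DynSysWithInputs X U) : Prop := UGS S ∧ UniformAG S

/-- **Proposition 4.3.** Let `X`, `U` be Banach spaces, `p ∈ [1,∞]`,
`𝒰 = L^p([0,∞),U)` with the `L^p`-norm, `(T_t)` a `C₀`-semigroup on `X`, and
`Φ : [0,∞) × 𝒰 → X` with each `Φ_t` linear and `t ↦ Φ_t(u)` continuous. If
`φ(t,x₀,u) := T_t x₀ + Φ_t(u)` defines a dynamical system with inputs, then this system is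
weakly input-to-state stable if and only if it is strongly input-to-state stable. -/
theorem linear_system_weakISS_iff_strongISS
    [NormedSpace ℝ X] [CompleteSpace X]
    [NormedAddCommGroup U] [NormedSpace ℝ U] [CompleteSpace U]
    (p : ℝ≥0∞) (hp : 1 ≤ p)
    (T : ℝ → X →L[ℝ] X)
    (hT0 : T 0 = ContinuousLinearMap.id ℝ X)
    (hTsem : ∀ s t : ℝ, 0 ≤ s → 0 ≤ t → T (t + s) = (T t).comp (T s))
    (hTcont : ∀ x : X, ContinuousOn (fun t => T t x) (Ici 0))
    (Φ : ℝ → (ℝ → U) → X)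
    (hΦadd : ∀ t : ℝ, 0 ≤ t → ∀ u v : ℝ → U,
      MemLp u p (volume.restrict (Ici (0:ℝ))) →
      MemLp v p (volume.restrict (Ici (0:ℝ))) →
      Φ t (u + v) = Φ t u + Φ t v)
    (hΦsmul : ∀ t : ℝ, 0 ≤ t → ∀ (c : ℝ) (u : ℝ → U),
      MemLp u p (volume.restrict (Ici (0:ℝ))) → Φ t (c • u) = c • Φ t u)
    (hΦcont : ∀ u : ℝ → U, MemLp u p (volume.restrict (Ici (0:ℝ))) →
      ContinuousOn (fun t => Φ t u) (Ici 0))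
    (S : DynSysWithInputs X U)
    (hS1 : S.inputs = {u : ℝ → U | MemLp u p (volume.restrict (Ici (0:ℝ)))})
    (hS2 : ∀ u : ℝ → U, S.inNorm u = (eLpNorm u p (volume.restrict (Ici (0:ℝ)))).toReal)
    (hS3 : ∀ (t : ℝ) (x₀ : X) (u : ℝ → U), S.flow t x₀ u = T t x₀ + Φ t u) :
    WeakISS S ↔ StrongISS S := by
  constructor
  · rintro ⟨hUGS, gbar, hgbar, hWAG⟩
    refine ⟨hUGS, ?_⟩
    obtain ⟨σ, γ, hσ, hγ, hUW⟩ := hUGS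
    have h0mem : (0 : ℝ → U) ∈ S.inputs := by rw [hS1]; exact MemLp.zero
    have h0norm : S.inNorm (0 : ℝ → U) = 0 := by
      rw [hS2]; simp [eLpNorm_zero]
    have hgbar0 : gbar 0 = 0 := by
      rcases hgbar with h | h
      · exact h.2.2.1
      · exact h 0
    refine ⟨γ, Or.inl hγ, ?_⟩
    intro ε hε x₀
    obtain ⟨τ, hτ0, hτ⟩ := hWAG ε hε x₀ 0 h0mem
    refine ⟨τ, hτ0, ?_⟩
    intro t ht u hu
    have ht0 : (0:ℝ) ≤ t := le_trans hτ0 ht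
    have hΦ0 : Φ t (0 : ℝ → U) = 0 := by
      have := hΦsmul t ht0 0 0 MemLp.zero
      simpa using this
    have hT : ‖T t x₀‖ ≤ ε := by
      have := hτ t ht
      rw [hS3, hΦ0, add_zero, h0norm, hgbar0, add_zero] at this
      exact this
    have hΦb : ‖Φ t u‖ ≤ γ (S.inNorm u) := by
      have := hUW 0 u hu t ht0
      rw [hS3, map_zero, zero_add, norm_zero, hσ.2.2.1, zero_add] at this
      exact this
    calc ‖S.flow t x₀ u‖ = ‖T t x₀ + Φ t u‖ := by rw [hS3]
      _ ≤ ‖T t x₀‖ + ‖Φ t u‖ := norm_add_le _ _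
      _ ≤ ε + γ (S.inNorm u) := add_le_add hT hΦb
  · rintro ⟨hUGS, γ, hγ, hSAG⟩
    refine ⟨hUGS, γ, hγ, ?_⟩
    intro ε hε x₀ u hu
    obtain ⟨τ, hτ0, hτ⟩ := hSAG ε hε x₀
    exact ⟨τ, hτ0, fun t ht => hτ t ht u hu⟩
end
end

section
/- Let X and U be Banach spaces, p ∈ [1,∞) ∪ {∞}, and 𝒰 := L^p([0,∞),U) with ‖·‖_𝒰 = ‖·‖_{L^p}. Let (T_t)_{t≥0} be a C₀-semigroup on X and let Φ_t ∈ L(𝒰, X) (bounded linear operators) for t ≥ 0 be such that t ↦ Φ_t(u) is continuous for each u ∈ 𝒰, and suppose φ(t,x₀,u) := T_t x₀ + Φ_t(u) defines a dynamical system with inputs 𝔖 := (X,𝒰,φ). Then 𝔖 is weakly input-to-state stable if and only if 𝔖 is zero-input uniformly locally stable and of weak asymptotic gain. -/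
open MeasureTheory Filter Set Topology
open scoped ENNReal NNReal

noncomputable section

variable {X U : Type*} [NormedAddCommGroup X]

/-- Zero-input uniform local stability: `0 ∈ 𝒰` and there exist `σ̲ ∈ 𝒦` and `r > 0` with
`‖φ(t,x₀,0)‖ ≤ σ̲(‖x₀‖)` for all `t ≥ 0` and all `‖x₀‖ ≤ r`. -/
def ZeroInputULS [Zero U] (S : DynSysWithInputs X U) : Prop :=
  (fun _ : ℝ => (0 : U)) ∈ S.inputs ∧
  ∃ σ : ℝ → ℝ, ClassK σ ∧ ∃ r : ℝ, 0 < r ∧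
    ∀ x₀ : X, ‖x₀‖ ≤ r → ∀ t : ℝ, 0 ≤ t → ‖S.flow t x₀ (fun _ : ℝ => (0 : U))‖ ≤ σ ‖x₀‖

lemma classK_linear {c : ℝ} (hc : 0 < c) : ClassK (fun s => c * s) := by
  refine ⟨(continuous_const.mul continuous_id).continuousOn, ?_, by simp, ?_⟩
  · intro a _ b _ hab
    exact mul_lt_mul_of_pos_left hab hc
  · intro r hr
    exact mul_nonneg hc.le hr

/-- **Proposition 5.3.** Let `X`, `U` be Banach spaces, `p ∈ [1,∞]`,
`𝒰 = L^p([0,∞),U)`, `(T_t)` a `C₀`-semigroup on `X`, and `Φ_t : 𝒰 → X` bounded linear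
operators with `t ↦ Φ_t(u)` continuous. If `φ(t,x₀,u) := T_t x₀ + Φ_t(u)` defines a dynamical
system with inputs, then this system is weakly input-to-state stable if and only if it is
zero-input uniformly locally stable and of weak asymptotic gain. -/
theorem linear_system_weakISS_iff_zeroInputULS_and_weakAG
    [NormedSpace ℝ X] [CompleteSpace X]
    [NormedAddCommGroup U] [NormedSpace ℝ U] [CompleteSpace U]
    (p : ℝ≥0∞) (hp : 1 ≤ p)
    (T : ℝ → X →L[ℝ] X)
    (hT0 : T 0 = ContinuousLinearMap.id ℝ X)
    (hTsem : ∀ s t : ℝ, 0 ≤ s → 0 ≤ t → T (t + s) = (T t).comp (T s))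
    (hTcont : ∀ x : X, ContinuousOn (fun t => T t x) (Ici 0))
    (Φ : ℝ → (ℝ → U) → X)
    (hΦadd : ∀ t : ℝ, 0 ≤ t → ∀ u v : ℝ → U,
      MemLp u p (volume.restrict (Ici (0:ℝ))) →
      MemLp v p (volume.restrict (Ici (0:ℝ))) →
      Φ t (u + v) = Φ t u + Φ t v)
    (hΦsmul : ∀ t : ℝ, 0 ≤ t → ∀ (c : ℝ) (u : ℝ → U),
      MemLp u p (volume.restrict (Ici (0:ℝ))) → Φ t (c • u) = c • Φ t u)
    (hΦbdd : ∀ t : ℝ, 0 ≤ t → ∃ C : ℝ, ∀ u : ℝ → U,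
      MemLp u p (volume.restrict (Ici (0:ℝ))) →
      ‖Φ t u‖ ≤ C * (eLpNorm u p (volume.restrict (Ici (0:ℝ)))).toReal)
    (hΦcont : ∀ u : ℝ → U, MemLp u p (volume.restrict (Ici (0:ℝ))) →
      ContinuousOn (fun t => Φ t u) (Ici 0))
    (S : DynSysWithInputs X U)
    (hS1 : S.inputs = {u : ℝ → U | MemLp u p (volume.restrict (Ici (0:ℝ)))})
    (hS2 : ∀ u : ℝ → U, S.inNorm u = (eLpNorm u p (volume.restrict (Ici (0:ℝ)))).toReal)
    (hS3 : ∀ (t : ℝ) (x₀ : X) (u : ℝ → U), S.flow t x₀ u = T t x₀ + Φ t u) :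
    WeakISS S ↔ (ZeroInputULS S ∧ WeakAG S) := by
  classical
  haveI : Fact (1 ≤ p) := ⟨hp⟩
  set μ := volume.restrict (Ici (0:ℝ)) with hμ
  have hzero_mem : (fun _ : ℝ => (0 : U)) ∈ S.inputs := by
    rw [hS1]; exact MemLp.zero'
  have hinNorm_zero : S.inNorm (fun _ : ℝ => (0 : U)) = 0 := by
    rw [hS2]
    have h0 : (fun _ : ℝ => (0 : U)) = (0 : ℝ → U) := rfl
    rw [h0, eLpNorm_zero]; simp
  have hΦzero : ∀ t : ℝ, 0 ≤ t → Φ t (fun _ => (0:U)) = 0 := by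
    intro t ht
    have h0 : ((0:ℝ) • (fun _ : ℝ => (0:U))) = (fun _ : ℝ => (0:U)) := by
      funext s; simp
    have h1 := hΦsmul t ht 0 (fun _ => (0:U)) MemLp.zero'
    rw [h0] at h1
    rw [h1, zero_smul]
  constructor
  · rintro ⟨⟨σ, γ, hσ, hγ, hUGS⟩, hAG⟩
    refine ⟨⟨hzero_mem, σ, hσ, 1, one_pos, ?_⟩, hAG⟩
    intro x₀ _ t ht
    have h := hUGS x₀ _ hzero_mem t ht
    rwa [hinNorm_zero, hγ.2.2.1, add_zero] at h
  · rintro ⟨⟨_, σ, hσ, r, hr, hULS⟩, hAG⟩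
    refine ⟨?_, hAG⟩
    -- uniform bound on the semigroup
    have hTbd : ∀ t : ℝ, 0 ≤ t → ∀ x₀ : X, ‖T t x₀‖ ≤ (σ r / r) * ‖x₀‖ := by
      intro t ht x₀
      have hflow : ∀ y : X, S.flow t y (fun _ => (0:U)) = T t y := by
        intro y; rw [hS3, hΦzero t ht, add_zero]
      rcases eq_or_ne x₀ 0 with rfl | hx
      · simp
      · have hx0 : 0 < ‖x₀‖ := norm_pos_iff.mpr hx
        set c : ℝ := r / ‖x₀‖ with hc
        have hcpos : 0 < c := div_pos hr hx0
        have hnorm : ‖c • x₀‖ = r := by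
          rw [norm_smul, Real.norm_eq_abs, abs_of_pos hcpos, hc,
            div_mul_cancel₀ _ hx0.ne']
        have h1 := hULS (c • x₀) hnorm.le t ht
        rw [hflow, hnorm] at h1
        have hTs : T t (c • x₀) = c • T t x₀ := map_smul _ _ _
        rw [hTs, norm_smul, Real.norm_eq_abs, abs_of_pos hcpos] at h1
        have h2 : ‖T t x₀‖ ≤ σ r / c := by
          rw [le_div_iff₀ hcpos, mul_comm]; exact h1
        calc ‖T t x₀‖ ≤ σ r / c := h2
          _ = (σ r / r) * ‖x₀‖ := by
              rw [hc, div_div_eq_mul_div, ← div_mul_eq_mul_div]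
    -- a.e.-equal inputs give the same value of Φ
    have hker : ∀ t : ℝ, 0 ≤ t → ∀ u v : ℝ → U, MemLp u p μ → MemLp v p μ →
        u =ᵐ[μ] v → Φ t u = Φ t v := by
      intro t ht u v hu hv huv
      obtain ⟨C, hC⟩ := hΦbdd t ht
      have hsub : MemLp (u - v) p μ := hu.sub hv
      have h1 : Φ t u = Φ t (u - v) + Φ t v := by
        have he : u = (u - v) + v := by funext s; simp
        conv_lhs => rw [he]
        exact hΦadd t ht _ _ hsub hv
      have h2 : eLpNorm (u - v) p μ = 0 := by
        rw [eLpNorm_congr_ae (show u - v =ᵐ[μ] 0 by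
          filter_upwards [huv] with s hs
          simp [Pi.sub_apply, hs]), eLpNorm_zero]
      have h3 : ‖Φ t (u - v)‖ ≤ 0 := by
        have h := hC (u - v) hsub
        rwa [h2, ENNReal.toReal_zero, mul_zero] at h
      have h4 : Φ t (u - v) = 0 := norm_le_zero_iff.mp h3
      rw [h1, h4, zero_add]
    -- bundle Φ as bounded operators on Lp
    let Ψ : {t : ℝ // 0 ≤ t} → Lp U p μ →L[ℝ] X := fun t =>
      LinearMap.mkContinuousOfExistsBound
        { toFun := fun f => Φ t.1 f
          map_add' := fun f g => by
            show Φ t.1 ⇑(f + g) = Φ t.1 ⇑f + Φ t.1 ⇑g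
            rw [hker t.1 t.2 _ _ (Lp.memLp (f + g)) ((Lp.memLp f).add (Lp.memLp g))
              (Lp.coeFn_add f g)]
            exact hΦadd t.1 t.2 _ _ (Lp.memLp f) (Lp.memLp g)
          map_smul' := fun c f => by
            show Φ t.1 ⇑(c • f) = c • Φ t.1 ⇑f
            rw [hker t.1 t.2 _ _ (Lp.memLp (c • f)) ((Lp.memLp f).const_smul c)
              (Lp.coeFn_smul c f)]
            exact hΦsmul t.1 t.2 c _ (Lp.memLp f) }
        (by
          obtain ⟨C, hC⟩ := hΦbdd t.1 t.2
          exact ⟨C, fun f => by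
            rw [Lp.norm_def]; exact hC f (Lp.memLp f)⟩)
    obtain ⟨γ', hγ'cls, hγ'⟩ := hAG
    have hptwise : ∀ f : Lp U p μ, ∃ C, ∀ t : {t : ℝ // 0 ≤ t}, ‖Ψ t f‖ ≤ C := by
      intro f
      obtain ⟨τ, hτ0, hτ⟩ := hγ' 1 one_pos 0 f (by rw [hS1]; exact Lp.memLp f)
      obtain ⟨B, hB⟩ := (isCompact_Icc (a := (0:ℝ)) (b := τ)).exists_bound_of_continuousOn
        ((hΦcont f (Lp.memLp f)).mono (fun x hx => hx.1))
      refine ⟨max B (1 + γ' (S.inNorm f)), fun t => ?_⟩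
      rcases le_total t.1 τ with h | h
      · exact le_max_of_le_left (hB t.1 ⟨t.2, h⟩)
      · have h1 := hτ t.1 h
        rw [hS3] at h1
        simp only [map_zero, zero_add] at h1
        exact le_max_of_le_right h1
    obtain ⟨C', hC'⟩ := banach_steinhaus hptwise
    set M := σ r / r with hM
    have hM0 : 0 ≤ M := div_nonneg (hσ.2.2.2 r hr.le) hr.le
    refine ⟨fun s => (M + 1) * s, fun s => (max C' 0 + 1) * s,
      classK_linear (by linarith), classK_linear (by
        have h := le_max_right C' 0; linarith), ?_⟩
    intro x₀ u hu t ht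
    rw [hS1] at hu
    rw [hS3]
    have hΦu : ‖Φ t u‖ ≤ C' * S.inNorm u := by
      have e1 : Φ t u = Φ t ((hu.toLp u : Lp U p μ) : ℝ → U) :=
        hker t ht _ _ hu (Lp.memLp _) hu.coeFn_toLp.symm
      have e2 : ‖Ψ ⟨t, ht⟩ (hu.toLp u)‖ ≤ C' * ‖hu.toLp u‖ :=
        (Ψ ⟨t, ht⟩).le_of_opNorm_le (hC' ⟨t, ht⟩) _
      have e3 : ‖(hu.toLp u : Lp U p μ)‖ = S.inNorm u := by
        rw [Lp.norm_def, eLpNorm_congr_ae hu.coeFn_toLp, hS2]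
      rw [e1]
      calc ‖Φ t ((hu.toLp u : Lp U p μ) : ℝ → U)‖
          = ‖Ψ ⟨t, ht⟩ (hu.toLp u)‖ := rfl
        _ ≤ C' * ‖hu.toLp u‖ := e2
        _ = C' * S.inNorm u := by rw [e3]
    calc ‖T t x₀ + Φ t u‖ ≤ ‖T t x₀‖ + ‖Φ t u‖ := norm_add_le _ _
      _ ≤ M * ‖x₀‖ + C' * S.inNorm u := add_le_add (hTbd t ht x₀) hΦu
      _ ≤ (M + 1) * ‖x₀‖ + (max C' 0 + 1) * S.inNorm u := by
          have h1 : 0 ≤ ‖x₀‖ := norm_nonneg _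
          have h2 : 0 ≤ S.inNorm u := S.inNorm_nonneg u (by rw [hS1]; exact hu)
          have h3 : C' ≤ max C' 0 + 1 := by have := le_max_left C' 0; linarith
          nlinarith
end
end

section
/- Let b ∈ L²([0,∞),ℝ) satisfy b(ζ) ≥ 0 for almost every ζ ≥ 0 and b ∉ L¹([0,∞),ℝ), i.e., ∫₀^∞ b(ζ) dζ = ∞. For t ≥ 0 define g_t ∈ L²([0,∞),ℝ) by g_t(ζ) := ∫₀^t b(ζ+s) ds. Then liminf_{t→∞} ‖g_t‖_{L²} = ∞; in particular, for every C > 0 there exists t ≥ 0 with ‖g_t‖_{L²} > C. -/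
open MeasureTheory Filter Set Topology
open scoped ENNReal NNReal

/-- Let `b ∈ L²([0,∞),ℝ)` be a.e. nonnegative with `∫₀^∞ b = ∞`, and for
`t ≥ 0` let `g_t(ζ) := ∫₀^t b(ζ+s) ds`. Then `liminf_{t→∞} ‖g_t‖_{L²} = ∞`; in particular,
for every `C > 0` there is a `t ≥ 0` with `‖g_t‖_{L²} > C`. -/
theorem liminf_translates_integral_norm_eq_top
    (b : ℝ → ℝ)
    (hb : MemLp b 2 (volume.restrict (Ici (0:ℝ))))
    (hbnn : ∀ᵐ ζ ∂(volume.restrict (Ici (0:ℝ))), 0 ≤ b ζ)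
    (hbnotL1 : ∫⁻ ζ in Ici (0:ℝ), ENNReal.ofReal (b ζ) = ⊤) :
    Filter.liminf
        (fun t : ℝ =>
          eLpNorm (fun ζ : ℝ => ∫ s in (0:ℝ)..t, b (ζ + s)) 2 (volume.restrict (Ici (0:ℝ))))
        Filter.atTop = ⊤ ∧
      ∀ C : ℝ, 0 < C → ∃ t : ℝ, 0 ≤ t ∧
        ENNReal.ofReal C
          < eLpNorm (fun ζ : ℝ => ∫ s in (0:ℝ)..t, b (ζ + s)) 2 (volume.restrict (Ici (0:ℝ))) := by
  -- integrability of `b` on compact subsets of `[0,∞)`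
  have hIntOn : ∀ T : ℝ, IntegrableOn b (Icc 0 T) volume := by
    intro T
    haveI : IsFiniteMeasure (volume.restrict (Icc (0:ℝ) T)) :=
      ⟨by rw [Measure.restrict_apply_univ]; exact measure_Icc_lt_top⟩
    have h2 : MemLp b 2 (volume.restrict (Icc (0:ℝ) T)) :=
      hb.mono_measure (Measure.restrict_mono Icc_subset_Ici_self le_rfl)
    exact h2.integrable one_le_two
  -- a.e. nonnegativity on subsets of `[0,∞)`
  have hnnOn : ∀ s : Set ℝ, s ⊆ Ici (0:ℝ) →
      ∀ᵐ ζ ∂(volume.restrict s), 0 ≤ b ζ := fun s hs =>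
    ae_restrict_of_ae_restrict_of_subset hs hbnn
  -- the tail lintegral over `(1,∞)` is infinite
  have hIoi : ∫⁻ ζ in Ioi (1:ℝ), ENNReal.ofReal (b ζ) = ⊤ := by
    have hsplit : (Ici (0:ℝ)) = Icc 0 1 ∪ Ioi 1 := by
      ext x
      simp only [mem_Ici, mem_union, mem_Icc, mem_Ioi]
      constructor
      · intro hx
        rcases le_or_gt x 1 with h | h
        · exact Or.inl ⟨hx, h⟩
        · exact Or.inr h
      · rintro (⟨h, _⟩ | h) <;> linarith
    have hdisj : Disjoint (Icc (0:ℝ) 1) (Ioi 1) := by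
      apply Set.disjoint_left.2
      intro x hx hx'
      exact absurd hx.2 (not_le.2 hx')
    rw [hsplit, lintegral_union measurableSet_Ioi hdisj] at hbnotL1
    have hfin : ∫⁻ ζ in Icc (0:ℝ) 1, ENNReal.ofReal (b ζ) < ⊤ := by
      have h1 := (hIntOn 1).2
      refine lt_of_le_of_lt ?_ h1
      refine lintegral_mono fun x => ?_
      exact le_trans (ENNReal.ofReal_le_ofReal (le_abs_self _))
        (Real.enorm_eq_ofReal_abs _).ge
    by_contra h
    rw [ENNReal.add_eq_top] at hbnotL1
    rcases hbnotL1 with h' | h'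
    · exact absurd h' hfin.ne
    · exact h h'
  -- a measurable representative and the associated density measure
  obtain ⟨b', hb'sm, hbb'⟩ := hb.1
  have hbb'Ioi : ∀ᵐ ζ ∂(volume.restrict (Ioi (1:ℝ))), b ζ = b' ζ :=
    ae_restrict_of_ae_restrict_of_subset (s := Ioi (1:ℝ)) (t := Ici (0:ℝ)) (fun x (hx : 1 < x) => (le_of_lt (lt_trans one_pos hx) : (0:ℝ) ≤ x)) hbb'
  set ν : Measure ℝ := volume.withDensity (fun ζ => ENNReal.ofReal (b' ζ)) with hν
  have hν_apply : ∀ s : Set ℝ, MeasurableSet s → s ⊆ Ioi (1:ℝ) →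
      ν s = ∫⁻ ζ in s, ENNReal.ofReal (b ζ) := by
    intro s hms hs
    rw [hν, withDensity_apply _ hms]
    refine (lintegral_congr_ae ?_).symm
    have : ∀ᵐ ζ ∂(volume.restrict s), b ζ = b' ζ :=
      ae_restrict_of_ae_restrict_of_subset hs hbb'Ioi
    exact this.mono fun x hx => congrArg ENNReal.ofReal hx
  have hν_top : ν (Ioi 1) = ⊤ := by
    rw [hν_apply _ measurableSet_Ioi (subset_refl _)]; exact hIoi
  -- key step: the norm is eventually bigger than any finite `M`
  have key : ∀ M : ℝ≥0∞, M ≠ ⊤ → ∃ t₀ : ℝ, 1 ≤ t₀ ∧ ∀ t, t₀ ≤ t →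
      M < eLpNorm (fun ζ : ℝ => ∫ s in (0:ℝ)..t, b (ζ + s)) 2
        (volume.restrict (Ici (0:ℝ))) := by
    intro M hM
    -- find `n` with `ν (Ioc 1 n) > M`
    have hmono : Monotone fun n : ℕ => Ioc (1:ℝ) n := fun m n h =>
      Ioc_subset_Ioc_right (Nat.cast_le.2 h)
    have hUnion : ⋃ n : ℕ, Ioc (1:ℝ) (n : ℝ) = Ioi 1 := by
      ext x
      simp only [mem_iUnion, mem_Ioc, mem_Ioi]
      constructor
      · rintro ⟨n, h, _⟩; exact h
      · intro h
        obtain ⟨n, hn⟩ := exists_nat_ge x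
        exact ⟨n, h, hn⟩
    have htendν := tendsto_measure_iUnion_atTop (μ := ν) hmono
    rw [hUnion, hν_top] at htendν
    have hev : ∀ᶠ n : ℕ in atTop, M < ν (Ioc (1:ℝ) n) :=
      htendν.eventually (eventually_gt_nhds (lt_top_iff_ne_top.2 hM))
    obtain ⟨n, hn⟩ := hev.exists
    refine ⟨max (n:ℝ) 1, le_max_right _ _, fun t ht => ?_⟩
    have h1t : (1:ℝ) ≤ t := le_trans (le_max_right _ _) ht
    have hnt : (n:ℝ) ≤ t := le_trans (le_max_left _ _) ht
    set r : ℝ := ∫ x in Ioc (1:ℝ) t, b x with hr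
    have hnnIoc : ∀ᵐ ζ ∂(volume.restrict (Ioc (1:ℝ) t)), 0 ≤ b ζ :=
      hnnOn _ (fun x hx => le_of_lt (lt_trans one_pos hx.1))
    have hIntIoc : IntegrableOn b (Ioc (1:ℝ) t) volume :=
      (hIntOn t).mono_set (fun x hx => ⟨le_of_lt (lt_trans one_pos hx.1), hx.2⟩)
    have hr_nonneg : 0 ≤ r := integral_nonneg_of_ae hnnIoc
    -- `M < ofReal r`
    have hMr : M < ENNReal.ofReal r := by
      rw [hr, ofReal_integral_eq_lintegral_ofReal hIntIoc hnnIoc]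
      calc M < ν (Ioc (1:ℝ) n) := hn
        _ = ∫⁻ ζ in Ioc (1:ℝ) (n:ℝ), ENNReal.ofReal (b ζ) :=
          hν_apply _ measurableSet_Ioc (fun x hx => hx.1)
        _ ≤ ∫⁻ ζ in Ioc (1:ℝ) t, ENNReal.ofReal (b ζ) :=
          lintegral_mono_set (Ioc_subset_Ioc_right hnt)
    -- pointwise lower bound on `[0,1]`
    have hpt : ∀ ζ ∈ Icc (0:ℝ) 1, r ≤ ∫ s in (0:ℝ)..t, b (ζ + s) := by
      intro ζ hζ
      have hrw : (∫ s in (0:ℝ)..t, b (ζ + s)) = ∫ s in (0:ℝ)..t, b (s + ζ) := by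
        simp only [add_comm]
      rw [hrw, intervalIntegral.integral_comp_add_right, zero_add,
        intervalIntegral.integral_of_le (by linarith [hζ.1] : ζ ≤ t + ζ)]
      have hsub : Ioc ζ (t + ζ) ⊆ Icc 0 (t + 1) := fun x hx =>
        ⟨le_of_lt (lt_of_le_of_lt hζ.1 hx.1), le_trans hx.2 (by linarith [hζ.2])⟩
      have hsub2 : Ioc (1:ℝ) t ⊆ Ioc ζ (t + ζ) := fun x hx =>
        ⟨lt_of_le_of_lt hζ.2 hx.1, le_trans hx.2 (by linarith [hζ.1])⟩
      exact setIntegral_mono_set ((hIntOn (t+1)).mono_set hsub)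
        (hnnOn _ (fun x hx => le_of_lt (lt_of_le_of_lt hζ.1 hx.1)))
        (HasSubset.Subset.eventuallyLE hsub2)
    -- compare eLpNorms
    have hconst : eLpNorm (fun _ : ℝ => r) 2 (volume.restrict (Icc (0:ℝ) 1))
        = ENNReal.ofReal r := by
      have hμne : volume.restrict (Icc (0:ℝ) 1) ≠ 0 := by
        intro h
        have := congrArg (fun μ : Measure ℝ => μ univ) h
        simp [Measure.restrict_apply_univ, Real.volume_Icc] at this
      rw [eLpNorm_const _ two_ne_zero hμne]
      simp [Measure.restrict_apply_univ, Real.volume_Icc,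
        Real.enorm_eq_ofReal hr_nonneg]
    have hm1 : eLpNorm (fun _ : ℝ => r) 2 (volume.restrict (Icc (0:ℝ) 1))
        ≤ eLpNorm (fun ζ : ℝ => ∫ s in (0:ℝ)..t, b (ζ + s)) 2
          (volume.restrict (Icc (0:ℝ) 1)) := by
      refine eLpNorm_mono_ae ?_
      refine (ae_restrict_iff' measurableSet_Icc).2 (ae_of_all _ fun ζ hζ => ?_)
      rw [Real.norm_eq_abs, Real.norm_eq_abs, abs_of_nonneg hr_nonneg]
      exact le_trans (hpt ζ hζ) (le_abs_self _)
    have hm2 : eLpNorm (fun ζ : ℝ => ∫ s in (0:ℝ)..t, b (ζ + s)) 2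
          (volume.restrict (Icc (0:ℝ) 1))
        ≤ eLpNorm (fun ζ : ℝ => ∫ s in (0:ℝ)..t, b (ζ + s)) 2
          (volume.restrict (Ici (0:ℝ))) :=
      eLpNorm_mono_measure _ (Measure.restrict_mono Icc_subset_Ici_self le_rfl)
    calc M < ENNReal.ofReal r := hMr
      _ = _ := hconst.symm
      _ ≤ _ := hm1
      _ ≤ _ := hm2
  constructor
  · have htend : Tendsto
        (fun t : ℝ => eLpNorm (fun ζ : ℝ => ∫ s in (0:ℝ)..t, b (ζ + s)) 2
          (volume.restrict (Ici (0:ℝ)))) atTop (𝓝 ⊤) := by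
      refine ENNReal.tendsto_nhds_top fun n => ?_
      obtain ⟨t₀, _, h⟩ := key n (by simp)
      exact eventually_atTop.2 ⟨t₀, fun t ht => h t ht⟩
    exact htend.liminf_eq
  · intro C hC
    obtain ⟨t₀, ht₀, h⟩ := key (ENNReal.ofReal C) ENNReal.ofReal_ne_top
    exact ⟨t₀, by linarith, h t₀ le_rfl⟩
end

section
/- Let X := L²([0,∞),ℝ) and let 𝒰 := { u ∈ L^∞([0,∞),ℝ) : u is eventually exponentially decaying to 0, i.e., there exist τ_u ≥ 0 and C_u, α_u > 0 with |u(s)| ≤ C_u e^{−α_u s} for all s ≥ τ_u }, equipped with ‖·‖_𝒰 := ‖·‖_{L^∞}. Let b ∈ L²([0,∞),ℝ) with b ≥ 0 almost everywhere and b ∉ L¹([0,∞),ℝ), and define φ : [0,∞) × X × 𝒰 → X by φ(t,x₀,u)(ζ) := x₀(ζ+t) + ∫₀^t u(s) b(ζ+t−s) ds. Then the system 𝔖 := (X,𝒰,φ) is NOT uniformly locally stable: for all σ̲, γ̲ ∈ 𝒦 and all r > 0 there exist (x₀,u) ∈ X × 𝒰 with ‖x₀‖ ≤ r and ‖u‖_𝒰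 ≤ r and a time t ≥ 0 such that ‖φ(t,x₀,u)‖ > σ̲(‖x₀‖) + γ̲(‖u‖_𝒰). In particular, 𝔖 is not weakly input-to-state stable. -/
open MeasureTheory Filter Set Topology
open scoped ENNReal NNReal

noncomputable section

/-- The input space of the counterexample of Section 5.1: essentially bounded functions
`u : [0,∞) → ℝ` that are eventually exponentially decaying to `0`. -/
def ExpDecaySet : Set (ℝ → ℝ) :=
  {u | MemLp u ⊤ (volume.restrict (Ici (0:ℝ))) ∧
    ∃ τ C a : ℝ, 0 ≤ τ ∧ 0 < C ∧ 0 < a ∧ ∀ s : ℝ, τ ≤ s → |u s| ≤ C * Real.exp (-a * s)}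

/-- The flow of the counterexample of Section 5.1: the left-translation semigroup on
`L²([0,∞),ℝ)` with input operator `B v = v·b`, i.e.
`φ(t,x₀,u)(ζ) = x₀(ζ+t) + ∫₀^t u(s) b(ζ+t−s) ds`. -/
def shiftFlow (b : ℝ → ℝ) (t : ℝ) (x₀ u : ℝ → ℝ) : ℝ → ℝ :=
  fun ζ => x₀ (ζ + t) + ∫ s in (0:ℝ)..t, u s * b (ζ + t - s)

/-- Cauchy–Schwarz for lower Lebesgue integrals. -/
private lemma sq_lintegral_le' {α : Type*} [MeasurableSpace α] (μ : Measure α)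
    {B : α → ℝ≥0∞} (hB : AEMeasurable B μ) :
    (∫⁻ y, B y ∂μ) ^ (2:ℝ) ≤ μ Set.univ * ∫⁻ y, B y ^ (2:ℝ) ∂μ := by
  have h := ENNReal.lintegral_mul_le_Lp_mul_Lq μ (Real.holderConjugate_iff.mpr ⟨one_lt_two, by norm_num⟩ :
      Real.HolderConjugate 2 2) aemeasurable_const (f := fun _ => (1:ℝ≥0∞)) hB
  simp only [one_mul, Pi.mul_apply, ENNReal.one_rpow, lintegral_one] at h
  calc (∫⁻ y, B y ∂μ) ^ (2:ℝ)
      ≤ ((μ Set.univ) ^ (1/2:ℝ) * (∫⁻ y, B y ^ (2:ℝ) ∂μ) ^ (1/2:ℝ)) ^ (2:ℝ) :=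
        ENNReal.rpow_le_rpow h (by norm_num)
    _ = μ Set.univ * ∫⁻ y, B y ^ (2:ℝ) ∂μ := by
        rw [ENNReal.mul_rpow_of_nonneg _ _ (by norm_num), ← ENNReal.rpow_mul,
          ← ENNReal.rpow_mul]
        norm_num

/-- A Tonelli-type bound for the iterated integral of a moving-window kernel. -/
private lemma tonelli_bound' {B : ℝ → ℝ≥0∞} (hB : Measurable B) {t : ℝ} (_ht : 0 ≤ t) :
    (∫⁻ ζ in Ici (0:ℝ), ∫⁻ y in Ioc ζ (ζ + t), B y ^ (2:ℝ)) ≤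
      ENNReal.ofReal t * ∫⁻ y, B y ^ (2:ℝ) := by
  set H : ℝ → ℝ → ℝ≥0∞ := fun ζ y => if ζ < y ∧ y ≤ ζ + t then B y ^ (2:ℝ) else 0 with hHdef
  have hHmeas : Measurable (Function.uncurry H) := by
    apply Measurable.ite
    · exact (measurableSet_lt measurable_fst measurable_snd).inter
        (measurableSet_le measurable_snd (measurable_fst.add_const t))
    · exact (hB.comp measurable_snd).pow_const _
    · exact measurable_const
  have step1 : (∫⁻ ζ in Ici (0:ℝ), ∫⁻ y in Ioc ζ (ζ + t), B y ^ (2:ℝ))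
      = ∫⁻ ζ in Ici (0:ℝ), ∫⁻ y, H ζ y := by
    refine lintegral_congr fun ζ => ?_
    rw [← lintegral_indicator measurableSet_Ioc]
    refine lintegral_congr fun y => ?_
    simp [H, Set.indicator_apply, Set.mem_Ioc]
  rw [step1, lintegral_lintegral_swap hHmeas.aemeasurable]
  have step2 : ∀ y : ℝ, (∫⁻ ζ in Ici (0:ℝ), H ζ y) ≤ B y ^ (2:ℝ) * ENNReal.ofReal t := by
    intro y
    have hind : ∀ ζ, H ζ y = (Ico (y - t) y).indicator (fun _ => B y ^ (2:ℝ)) ζ := by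
      intro ζ
      simp only [H, Set.indicator_apply, Set.mem_Ico]
      refine if_congr ?_ rfl rfl
      constructor <;> rintro ⟨h1, h2⟩ <;> constructor <;> linarith
    calc (∫⁻ ζ in Ici (0:ℝ), H ζ y)
        = ∫⁻ ζ in Ici (0:ℝ), (Ico (y - t) y).indicator (fun _ => B y ^ (2:ℝ)) ζ := by
          exact lintegral_congr fun ζ => by rw [hind]
      _ = ∫⁻ ζ in Ico (y - t) y, B y ^ (2:ℝ) ∂(volume.restrict (Ici (0:ℝ))) := by
          rw [lintegral_indicator measurableSet_Ico]
      _ = B y ^ (2:ℝ) * (volume.restrict (Ici (0:ℝ))) (Ico (y - t) y) := by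
          rw [setLIntegral_const]
      _ ≤ B y ^ (2:ℝ) * ENNReal.ofReal t := by
          refine mul_le_mul_right ?_ _
          rw [Measure.restrict_apply measurableSet_Ico]
          refine le_trans (measure_mono Set.inter_subset_left) ?_
          rw [Real.volume_Ico]
          exact ENNReal.ofReal_le_ofReal (by linarith)
  calc (∫⁻ y, ∫⁻ ζ in Ici (0:ℝ), H ζ y)
      ≤ ∫⁻ y, B y ^ (2:ℝ) * ENNReal.ofReal t := lintegral_mono step2
    _ = ENNReal.ofReal t * ∫⁻ y, B y ^ (2:ℝ) := by
        rw [lintegral_mul_const' _ _ (by simp), mul_comm]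

/-- Let `X = L²([0,∞),ℝ)`, let `𝒰` be the set of essentially bounded
functions eventually exponentially decaying to `0` with the `L^∞`-norm, let `b ∈ L²([0,∞),ℝ)`
be a.e. nonnegative with `∫₀^∞ b = ∞`, and let `φ(t,x₀,u)(ζ) = x₀(ζ+t) + ∫₀^t u(s) b(ζ+t−s) ds`.
Then the system `(X,𝒰,φ)` is NOT uniformly locally stable (hence not weakly
input-to-state stable). -/
theorem shift_system_not_uniformly_locally_stable
    (b : ℝ → ℝ)
    (hb : MemLp b 2 (volume.restrict (Ici (0:ℝ))))
    (hbnn : ∀ᵐ ζ ∂(volume.restrict (Ici (0:ℝ))), 0 ≤ b ζ)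
    (hbnotL1 : ∫⁻ ζ in Ici (0:ℝ), ENNReal.ofReal (b ζ) = ⊤) :
    ∀ σ γ : ℝ → ℝ, ClassK σ → ClassK γ → ∀ r : ℝ, 0 < r →
      ∃ x₀ : ℝ → ℝ, MemLp x₀ 2 (volume.restrict (Ici (0:ℝ))) ∧
        (eLpNorm x₀ 2 (volume.restrict (Ici (0:ℝ)))).toReal ≤ r ∧
        ∃ u ∈ ExpDecaySet,
          (eLpNorm u ⊤ (volume.restrict (Ici (0:ℝ)))).toReal ≤ r ∧
          ∃ t : ℝ, 0 ≤ t ∧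
            σ ((eLpNorm x₀ 2 (volume.restrict (Ici (0:ℝ)))).toReal)
                + γ ((eLpNorm u ⊤ (volume.restrict (Ici (0:ℝ)))).toReal)
              < (eLpNorm (shiftFlow b t x₀ u) 2 (volume.restrict (Ici (0:ℝ)))).toReal := by
  intro σ γ hσ hγ r hr
  set μ : Measure ℝ := volume.restrict (Ici (0:ℝ)) with hμdef
  set K : ℝ := γ r with hKdef
  have hK : 0 ≤ K := hγ.2.2.2 r hr.le
  -- measurable nonnegative representative of b, vanishing off `Ici 0`
  set c : ℝ → ℝ := fun y => if 0 ≤ y then max (hb.1.mk b y) 0 else 0 with hcdef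
  have hcmeas : Measurable c := by
    exact Measurable.ite measurableSet_Ici (hb.1.stronglyMeasurable_mk.measurable.max
      measurable_const) measurable_const
  have hcnn : ∀ y, 0 ≤ c y := by
    intro y; by_cases h : 0 ≤ y <;> simp [c, h, le_max_right]
  have hczero : ∀ y, ¬ 0 ≤ y → c y = 0 := by intro y h; simp [c, h]
  have hcb : b =ᵐ[μ] c := by
    have h1 := hb.1.ae_eq_mk
    have h2 : ∀ᵐ y ∂μ, y ∈ Ici (0:ℝ) := ae_restrict_mem measurableSet_Ici
    filter_upwards [h1, h2, hbnn] with y hy1 hy2 hy3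
    simp only [c, if_pos (mem_Ici.mp hy2), ← hy1]
    exact (max_eq_left hy3).symm
  set B : ℝ → ℝ≥0∞ := fun y => ENNReal.ofReal (c y) with hBdef
  have hBmeas : Measurable B := hcmeas.ennreal_ofReal
  have hcB : ∀ y, (‖c y‖₊ : ℝ≥0∞) = B y := fun y => Real.enorm_eq_ofReal (hcnn y)
  have hBind : ∀ y, B y = (Ici (0:ℝ)).indicator B y := by
    intro y
    by_cases h : 0 ≤ y
    · simp [Set.indicator_apply, mem_Ici, h]
    · simp [Set.indicator_apply, mem_Ici, h, B, hczero y h]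
  -- the L² mass of c over the whole line is finite
  have hSμ : (∫⁻ y, B y ^ (2:ℝ) ∂μ) = ∫⁻ y, B y ^ (2:ℝ) := by
    rw [hμdef, ← lintegral_indicator measurableSet_Ici]
    refine lintegral_congr fun y => ?_
    by_cases h : 0 ≤ y
    · simp [Set.indicator_apply, mem_Ici, h]
    · simp [Set.indicator_apply, mem_Ici, h, B, hczero y h,
        ENNReal.zero_rpow_of_pos (by norm_num : (0:ℝ) < 2)]
  have hS : (∫⁻ y, B y ^ (2:ℝ)) < ⊤ := by
    rw [← hSμ]
    have h1 : (∫⁻ y, (‖b y‖₊ : ℝ≥0∞) ^ ((2:ℝ≥0∞)).toReal ∂μ) < ⊤ :=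
      lintegral_rpow_enorm_lt_top_of_eLpNorm_lt_top (by norm_num) (by norm_num) hb.2
    have h2 : (∫⁻ y, (‖b y‖₊ : ℝ≥0∞) ^ ((2:ℝ≥0∞)).toReal ∂μ) = ∫⁻ y, B y ^ (2:ℝ) ∂μ := by
      refine lintegral_congr_ae ?_
      filter_upwards [hcb] with y hy
      rw [hy, hcB y]; norm_num
    rwa [h2] at h1
  have hc2 : MemLp c 2 volume := by
    refine ⟨hcmeas.aestronglyMeasurable, ?_⟩
    rw [eLpNorm_eq_lintegral_rpow_enorm_toReal (by norm_num) (by norm_num)]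
    refine ENNReal.rpow_lt_top_of_nonneg (by norm_num) ?_
    simp only [ENNReal.toReal_ofNat]
    rw [show (∫⁻ y, ‖c y‖ₑ ^ (2:ℝ)) = ∫⁻ y, B y ^ (2:ℝ) from
      lintegral_congr fun y => by rw [← hcB y]; rfl]
    exact hS.ne
  have hcint : ∀ a d : ℝ, IntervalIntegrable c volume a d := by
    intro a d
    refine IntegrableOn.intervalIntegrable ?_
    haveI : IsFiniteMeasure (volume.restrict (uIcc a d)) :=
      ⟨by rw [Measure.restrict_apply_univ]; exact measure_Icc_lt_top⟩
    exact (hc2.restrict (uIcc a d)).integrable (by norm_num)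
  have hfinOn : ∀ s : Set ℝ, IntegrableOn c s volume → (∫⁻ y in s, B y) < ⊤ := by
    intro s hs
    have h2 := (hasFiniteIntegral_def _ _).mp hs.2
    refine lt_of_eq_of_lt ?_ h2
    refine lintegral_congr fun y => ?_
    rw [hBdef]; exact (Real.enorm_eq_ofReal (hcnn y)).symm
  -- total mass of B is infinite
  have htot : (∫⁻ y, B y) = ⊤ := by
    have h1 : (∫⁻ y, ENNReal.ofReal (b y) ∂μ) = ∫⁻ y, B y ∂μ := by
      refine lintegral_congr_ae ?_
      filter_upwards [hcb] with y hy
      rw [hy, hBdef]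
    have h2 : (∫⁻ y, B y ∂μ) = ∫⁻ y, B y := by
      rw [hμdef, ← lintegral_indicator measurableSet_Ici]
      exact lintegral_congr fun y => (hBind y).symm
    rw [← h2, ← h1, hμdef]
    exact hbnotL1
  have hfin1 : (∫⁻ y in Iic (1:ℝ), B y) < ⊤ := by
    have h1 : (∫⁻ y in Iic (1:ℝ), B y) = ∫⁻ y in Ici (0:ℝ) ∩ Iic 1, B y := by
      calc (∫⁻ y in Iic (1:ℝ), B y)
          = ∫⁻ y in Iic (1:ℝ), (Ici (0:ℝ)).indicator B y :=
            lintegral_congr fun y => hBind y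
        _ = ∫⁻ y in Ici (0:ℝ), B y ∂(volume.restrict (Iic 1)) :=
            lintegral_indicator measurableSet_Ici _
        _ = ∫⁻ y in Ici (0:ℝ) ∩ Iic 1, B y := by
            rw [Measure.restrict_restrict measurableSet_Ici]
    rw [h1, Set.Ici_inter_Iic]
    refine hfinOn _ ?_
    refine IntegrableOn.mono_set (hcint (-1) 1).1 ?_
    intro x hx; exact ⟨by linarith [hx.1], hx.2⟩
  have hIoi : (∫⁻ y in Ioi (1:ℝ), B y) = ⊤ := by
    by_contra h
    have := lintegral_add_compl B (measurableSet_Iic (a := (1:ℝ))) (μ := volume)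
    rw [Set.compl_Iic] at this
    rw [htot] at this
    exact ENNReal.add_ne_top.mpr ⟨hfin1.ne, h⟩ this
  -- choose a large time from a monotone exhaustion
  have hsup : (⨆ n : ℕ, (volume.withDensity B) (Ioc (1:ℝ) (n:ℝ))) = ⊤ := by
    have hmono : Monotone fun n : ℕ => Ioc (1:ℝ) (n:ℝ) := by
      intro m n hmn
      exact Set.Ioc_subset_Ioc le_rfl (Nat.cast_le.mpr hmn)
    have hdir : Directed (· ⊆ ·) fun n : ℕ => Ioc (1:ℝ) (n:ℝ) := hmono.directed_le
    have hU : (⋃ n : ℕ, Ioc (1:ℝ) (n:ℝ)) = Ioi 1 := by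
      ext x
      simp only [Set.mem_iUnion, Set.mem_Ioc, Set.mem_Ioi]
      constructor
      · rintro ⟨n, h1, _⟩; exact h1
      · intro h1
        obtain ⟨n, hn⟩ := exists_nat_ge x
        exact ⟨n, h1, hn⟩
    rw [← hdir.measure_iUnion, hU, withDensity_apply _ measurableSet_Ioi]
    exact hIoi
  obtain ⟨n, hn⟩ : ∃ n : ℕ, ENNReal.ofReal (K / r) < (volume.withDensity B) (Ioc (1:ℝ) (n:ℝ)) := by
    have : ENNReal.ofReal (K / r) < ⨆ n : ℕ, (volume.withDensity B) (Ioc (1:ℝ) (n:ℝ)) := by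
      rw [hsup]; exact ENNReal.ofReal_lt_top
    exact lt_iSup_iff.mp this
  rw [withDensity_apply _ measurableSet_Ioc] at hn
  have ht1 : (1:ℝ) < n := by
    by_contra h
    rw [Set.Ioc_eq_empty (by simpa using h), Measure.restrict_empty, lintegral_zero_measure] at hn
    exact zero_le.not_gt hn
  set t : ℝ := (n : ℝ) with htdef
  have ht0 : (0:ℝ) ≤ t := by linarith
  have hνfin : (∫⁻ y in Ioc (1:ℝ) t, B y) < ⊤ := by
    refine hfinOn _ ?_
    exact IntegrableOn.mono_set (hcint 1 t).1 subset_rfl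
  -- the real interval integral exceeds K / r
  set I : ℝ := ∫ y in (1:ℝ)..t, c y with hIdef
  have hI : K / r < I := by
    have h1 : (∫ y in (1:ℝ)..t, c y) = ∫ y in Ioc (1:ℝ) t, c y ∂volume :=
      intervalIntegral.integral_of_le ht1.le
    have h2 : (∫ y in Ioc (1:ℝ) t, c y ∂volume) = (∫⁻ y in Ioc (1:ℝ) t, B y).toReal := by
      rw [integral_eq_lintegral_of_nonneg_ae (ae_of_all _ hcnn) hcmeas.aestronglyMeasurable]
    rw [hIdef, h1, h2]
    have h3 : K / r = (ENNReal.ofReal (K / r)).toReal :=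
      (ENNReal.toReal_ofReal (div_nonneg hK hr.le)).symm
    rw [h3]
    exact (ENNReal.toReal_lt_toReal ENNReal.ofReal_ne_top hνfin.ne).mpr hn
  have hI0 : 0 ≤ I := intervalIntegral.integral_nonneg ht1.le (fun y _ => hcnn y)
  -- the input u
  set u : ℝ → ℝ := fun s => if s ≤ t then r else r * Real.exp (t - s) with hudef
  have humeas : Measurable u :=
    Measurable.ite measurableSet_Iic measurable_const
      (measurable_const.mul ((measurable_const.sub measurable_id).exp))
  have hut : ∀ s, s ≤ t → u s = r := by intro s hs; rw [hudef]; simp [hs]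
  have hubound : ∀ s, |u s| ≤ r := by
    intro s
    rw [hudef]
    by_cases h : s ≤ t
    · simp [h, abs_of_nonneg hr.le]
    · simp only [if_neg h]
      rw [abs_of_nonneg (mul_nonneg hr.le (Real.exp_nonneg _))]
      nlinarith [Real.exp_le_one_iff.mpr (by linarith : t - s ≤ 0), Real.exp_nonneg (t - s)]
  have hu𝒰 : u ∈ ExpDecaySet := by
    refine ⟨memLp_top_of_bound humeas.aestronglyMeasurable r
      (ae_of_all _ fun s => by rw [Real.norm_eq_abs]; exact hubound s), t, r * Real.exp t, 1,
      ht0, by positivity, one_pos, ?_⟩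
    intro s hs
    rw [hudef]
    by_cases h : s ≤ t
    · simp only [if_pos h]
      rw [abs_of_nonneg hr.le, neg_one_mul, mul_assoc, ← Real.exp_add]
      nlinarith [Real.one_le_exp (by linarith : (0:ℝ) ≤ t + -s), hr.le]
    · simp only [if_neg h]
      rw [abs_of_nonneg (mul_nonneg hr.le (Real.exp_nonneg _)), sub_eq_add_neg, neg_one_mul,
        mul_assoc, ← Real.exp_add]
  have hu_norm : (eLpNorm u ⊤ μ).toReal ≤ r := by
    refine ENNReal.toReal_le_of_le_ofReal hr.le ?_
    rw [eLpNorm_exponent_top]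
    exact eLpNormEssSup_le_of_ae_bound
      (ae_of_all _ fun s => by rw [Real.norm_eq_abs]; exact hubound s)
  -- the moving-window integral
  set g : ℝ → ℝ := fun ζ => ∫ y in ζ..(ζ + t), c y with hgdef
  have hgnn : ∀ ζ, 0 ≤ g ζ := fun ζ =>
    intervalIntegral.integral_nonneg (by linarith) (fun y _ => hcnn y)
  have hgI : ∀ ζ ∈ Icc (0:ℝ) 1, I ≤ g ζ := by
    intro ζ hζ
    exact intervalIntegral.integral_mono_interval hζ.2 ht1.le (by linarith [hζ.1])
      (Eventually.of_forall fun y => hcnn y) (hcint ζ (ζ + t))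
  -- the flow identity
  have hbc' : ∀ᵐ y ∂volume, y ∈ Ici (0:ℝ) → b y = c y := by
    rw [← ae_restrict_iff' measurableSet_Ici, ← hμdef]; exact hcb
  have hfg : ∀ ζ, ζ ∈ Ici (0:ℝ) → shiftFlow b t (fun _ => (0:ℝ)) u ζ = r * g ζ := by
    intro ζ hζ
    have hζ0 : (0:ℝ) ≤ ζ := hζ
    unfold shiftFlow
    rw [zero_add]
    have e1 : (∫ s in (0:ℝ)..t, u s * b (ζ + t - s)) = ∫ s in (0:ℝ)..t, r * b (ζ + t - s) := by
      refine intervalIntegral.integral_congr fun s hs => ?_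
      rw [Set.uIcc_of_le ht0] at hs
      rw [hut s hs.2]
    have e2 : (∫ s in (0:ℝ)..t, r * b (ζ + t - s)) = r * ∫ s in (0:ℝ)..t, b (ζ + t - s) :=
      intervalIntegral.integral_const_mul _ _
    have e3 : (∫ s in (0:ℝ)..t, b (ζ + t - s)) = ∫ y in (ζ + t - t)..(ζ + t - 0), b y :=
      intervalIntegral.integral_comp_sub_left b (ζ + t)
    have e4 : (∫ y in ζ..(ζ + t), b y) = ∫ y in ζ..(ζ + t), c y := by
      refine intervalIntegral.integral_congr_ae ?_
      filter_upwards [hbc'] with y hy hymem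
      refine hy ?_
      rw [Set.uIoc_of_le (by linarith : ζ ≤ ζ + t)] at hymem
      exact le_of_lt (lt_of_le_of_lt hζ0 hymem.1)
    rw [e1, e2, e3]
    simp only [add_sub_cancel_right, sub_zero]
    rw [e4]
  have hflow_ae : shiftFlow b t (fun _ => (0:ℝ)) u =ᵐ[μ] fun ζ => r * g ζ := by
    rw [hμdef]
    exact (ae_restrict_iff' measurableSet_Ici).mpr (ae_of_all _ fun ζ hζ => hfg ζ hζ)
  have hEeq : eLpNorm (shiftFlow b t (fun _ => (0:ℝ)) u) 2 μ
      = eLpNorm (fun ζ => r * g ζ) 2 μ := eLpNorm_congr_ae hflow_ae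
  -- lower bound for the norm of the final state
  have hlow : ENNReal.ofReal (r * I) ≤ eLpNorm (fun ζ => r * g ζ) 2 μ := by
    have hres : μ.restrict (Icc (0:ℝ) 1) = volume.restrict (Icc (0:ℝ) 1) := by
      rw [hμdef, Measure.restrict_restrict measurableSet_Icc,
        Set.inter_eq_left.mpr (fun x hx => hx.1)]
    have hne : volume.restrict (Icc (0:ℝ) 1) ≠ 0 := by
      simp [Measure.restrict_eq_zero, Real.volume_Icc]
    have h1 : eLpNorm (fun _ : ℝ => r * I) 2 (volume.restrict (Icc (0:ℝ) 1))
        ≤ eLpNorm (fun ζ => r * g ζ) 2 (volume.restrict (Icc (0:ℝ) 1)) := by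
      refine eLpNorm_mono_ae ?_
      rw [ae_restrict_iff' measurableSet_Icc]
      refine ae_of_all _ fun ζ hζ => ?_
      rw [Real.norm_eq_abs, Real.norm_eq_abs, abs_of_nonneg (by positivity),
        abs_of_nonneg (mul_nonneg hr.le (hgnn ζ))]
      exact mul_le_mul_of_nonneg_left (hgI ζ hζ) hr.le
    have h2 : eLpNorm (fun _ : ℝ => r * I) 2 (volume.restrict (Icc (0:ℝ) 1))
        = ENNReal.ofReal (r * I) := by
      have huniv : (volume.restrict (Icc (0:ℝ) 1)) Set.univ = 1 := by
        rw [Measure.restrict_apply_univ, Real.volume_Icc]; norm_num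
      rw [eLpNorm_const _ (by norm_num) hne, huniv, ENNReal.one_rpow, mul_one,
        Real.enorm_eq_ofReal (mul_nonneg hr.le hI0)]
    calc ENNReal.ofReal (r * I) = eLpNorm (fun _ : ℝ => r * I) 2 (volume.restrict (Icc (0:ℝ) 1)) :=
          h2.symm
      _ ≤ eLpNorm (fun ζ => r * g ζ) 2 (volume.restrict (Icc (0:ℝ) 1)) := h1
      _ = eLpNorm (fun ζ => r * g ζ) 2 (μ.restrict (Icc (0:ℝ) 1)) := by rw [hres]
      _ ≤ eLpNorm (fun ζ => r * g ζ) 2 μ := eLpNorm_mono_measure _ Measure.restrict_le_self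
  -- upper bound: the norm of the final state is finite
  have hup : eLpNorm (fun ζ => r * g ζ) 2 μ ≠ ⊤ := by
    rw [eLpNorm_eq_lintegral_rpow_enorm_toReal (by norm_num) (by norm_num)]
    refine (ENNReal.rpow_lt_top_of_nonneg (by norm_num) ?_).ne
    simp only [ENNReal.toReal_ofNat]
    refine LT.lt.ne ?_
    have key : ∀ ζ : ℝ, (‖r * g ζ‖₊ : ℝ≥0∞) ^ (2:ℝ)
        ≤ ENNReal.ofReal r ^ (2:ℝ) * (ENNReal.ofReal t * ∫⁻ y in Ioc ζ (ζ + t), B y ^ (2:ℝ)) := by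
      intro ζ
      have hg_eq : g ζ = (∫⁻ y in Ioc ζ (ζ + t), B y).toReal := by
        show (∫ y in ζ..(ζ + t), c y) = _
        rw [intervalIntegral.integral_of_le (by linarith : ζ ≤ ζ + t),
          integral_eq_lintegral_of_nonneg_ae (ae_of_all _ hcnn) hcmeas.aestronglyMeasurable]
      have h1 : (‖r * g ζ‖₊ : ℝ≥0∞) ≤ ENNReal.ofReal r * ∫⁻ y in Ioc ζ (ζ + t), B y := by
        rw [← enorm_eq_nnnorm, Real.enorm_eq_ofReal (mul_nonneg hr.le (hgnn ζ)), ENNReal.ofReal_mul hr.le,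
          hg_eq]
        exact mul_le_mul_right ENNReal.ofReal_toReal_le _
      calc (‖r * g ζ‖₊ : ℝ≥0∞) ^ (2:ℝ)
          ≤ (ENNReal.ofReal r * ∫⁻ y in Ioc ζ (ζ + t), B y) ^ (2:ℝ) :=
            ENNReal.rpow_le_rpow h1 (by norm_num)
        _ = ENNReal.ofReal r ^ (2:ℝ) * (∫⁻ y in Ioc ζ (ζ + t), B y) ^ (2:ℝ) :=
            ENNReal.mul_rpow_of_nonneg _ _ (by norm_num)
        _ ≤ ENNReal.ofReal r ^ (2:ℝ) * (ENNReal.ofReal t * ∫⁻ y in Ioc ζ (ζ + t), B y ^ (2:ℝ)) := by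
            refine mul_le_mul_right ?_ _
            have := sq_lintegral_le' (volume.restrict (Ioc ζ (ζ + t))) hBmeas.aemeasurable
            rwa [Measure.restrict_apply_univ, Real.volume_Ioc, add_sub_cancel_left] at this
    calc (∫⁻ ζ, (‖r * g ζ‖₊ : ℝ≥0∞) ^ (2:ℝ) ∂μ)
        ≤ ∫⁻ ζ, ENNReal.ofReal r ^ (2:ℝ) *
            (ENNReal.ofReal t * ∫⁻ y in Ioc ζ (ζ + t), B y ^ (2:ℝ)) ∂μ :=
          lintegral_mono fun ζ => key ζ
      _ = ENNReal.ofReal r ^ (2:ℝ) * (ENNReal.ofReal t *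
            ∫⁻ ζ, (∫⁻ y in Ioc ζ (ζ + t), B y ^ (2:ℝ)) ∂μ) := by
          rw [lintegral_const_mul' _ _
            (ENNReal.rpow_lt_top_of_nonneg (by norm_num) ENNReal.ofReal_ne_top).ne]
          congr 1
          rw [lintegral_const_mul' _ _ ENNReal.ofReal_ne_top]
      _ ≤ ENNReal.ofReal r ^ (2:ℝ) * (ENNReal.ofReal t *
            (ENNReal.ofReal t * ∫⁻ y, B y ^ (2:ℝ))) := by
          refine mul_le_mul_right (mul_le_mul_right ?_ _) _
          rw [hμdef]
          exact tonelli_bound' hBmeas ht0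
      _ < ⊤ := by
          refine ENNReal.mul_lt_top ?_ (ENNReal.mul_lt_top ?_ (ENNReal.mul_lt_top ?_ hS))
          · exact ENNReal.rpow_lt_top_of_nonneg (by norm_num) ENNReal.ofReal_ne_top
          all_goals exact ENNReal.ofReal_lt_top
  -- assemble the counterexample
  refine ⟨fun _ => (0:ℝ), ?_, ?_, u, hu𝒰, hu_norm, t, ht0, ?_⟩
  · exact MemLp.zero'
  · rw [eLpNorm_zero']; simpa using hr.le
  · have hx0 : eLpNorm (fun _ : ℝ => (0:ℝ)) 2 μ = 0 := eLpNorm_zero'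
    rw [hx0]
    simp only [ENNReal.toReal_zero]
    rw [hσ.2.2.1]
    have hγle : γ ((eLpNorm u ⊤ μ).toReal) ≤ K := by
      rw [hKdef]
      exact hγ.2.1.monotoneOn (mem_Ici.mpr ENNReal.toReal_nonneg) (mem_Ici.mpr hr.le) hu_norm
    have hKrI : K < r * I := by
      have := (div_lt_iff₀ hr).mp hI
      linarith [this]
    have hfinal : r * I ≤ (eLpNorm (shiftFlow b t (fun _ => (0:ℝ)) u) 2 μ).toReal := by
      rw [hEeq]
      have h := ENNReal.toReal_mono hup hlow
      rwa [ENNReal.toReal_ofReal (mul_nonneg hr.le hI0)] at h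
    linarith
end
end

section
/- Let X := L²([0,∞),ℝ) and let 𝒰 := { u ∈ L^∞([0,∞),ℝ) : there exist τ_u ≥ 0 and C_u, α_u > 0 with |u(s)| ≤ C_u e^{−α_u s} for all s ≥ τ_u }, equipped with ‖·‖_𝒰 := ‖·‖_{L^∞}. Let b ∈ L²([0,∞),ℝ) and define φ : [0,∞) × X × 𝒰 → X by φ(t,x₀,u)(ζ) := x₀(ζ+t) + ∫₀^t u(s) b(ζ+t−s) ds. Then: (a) ‖φ(t,x₀,0)‖_{L²} ≤ ‖x₀‖_{L²} for all t ≥ 0 and x₀ ∈ X, so the system 𝔖 := (X,𝒰,φ) is zero-input uniformly globally stable; and (b) for every (x₀,u) ∈ X × 𝒰, ‖φ(t,x₀,u)‖_{L²} → 0 as t → ∞, i.e., 𝔖 is of weak asymptotic gain 0. -/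
open MeasureTheory Filter Set Topology
open scoped ENNReal NNReal

noncomputable section

lemma tail_lintegral_tendsto {μ : Measure ℝ} (h : ℝ → ℝ≥0∞)
    (hfin : ∫⁻ y, h y ∂μ ≠ ∞) :
    Tendsto (fun r : ℝ => ∫⁻ y in Ici r, h y ∂μ) atTop (𝓝 0) := by
  have hanti : ∀ {r r' : ℝ}, r ≤ r' → (∫⁻ y in Ici r', h y ∂μ) ≤ ∫⁻ y in Ici r, h y ∂μ :=
    fun hrr' => lintegral_mono_set (Ici_subset_Ici.mpr hrr')
  have hap : ∀ r : ℝ, (μ.withDensity h) (Ici r) = ∫⁻ y in Ici r, h y ∂μ :=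
    fun r => withDensity_apply h measurableSet_Ici
  have hempty : (⋂ n : ℕ, Ici ((n : ℝ))) = ∅ := by
    ext y
    simp only [mem_iInter, mem_Ici, mem_empty_iff_false, iff_false, not_forall, not_le]
    obtain ⟨n, hn⟩ := exists_nat_gt y
    exact ⟨n, hn⟩
  have hseq : Tendsto (fun n : ℕ => (μ.withDensity h) (Ici (n : ℝ))) atTop (𝓝 0) := by
    have h0 : (μ.withDensity h) (Ici (0 : ℝ)) ≠ ∞ := by
      rw [hap]
      exact ne_top_of_le_ne_top hfin (setLIntegral_le_lintegral _ _)
    have := tendsto_measure_iInter_atTop (μ := μ.withDensity h)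
      (s := fun n : ℕ => Ici ((n : ℝ)))
      (fun n => measurableSet_Ici.nullMeasurableSet)
      (fun n m hnm => Ici_subset_Ici.mpr (by exact_mod_cast hnm))
      ⟨0, by simpa using h0⟩
    rw [hempty] at this
    simpa [Function.comp_def, hap] using this
  rw [ENNReal.tendsto_nhds_zero]
  intro ε hε
  obtain ⟨n, hn⟩ := (ENNReal.tendsto_nhds_zero.mp hseq ε hε).exists
  rw [hap] at hn
  filter_upwards [eventually_ge_atTop ((n : ℝ))] with r hr
  exact le_trans (hanti hr) hn

lemma lintegral_shift_Ici (h : ℝ → ℝ≥0∞) (t : ℝ) :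
    ∫⁻ ζ in Ici (0:ℝ), h (ζ + t) = ∫⁻ y in Ici t, h y := by
  have key : ∀ ζ : ℝ, (Ici (0:ℝ)).indicator (fun ζ => h (ζ + t)) ζ
      = (Ici t).indicator h (ζ + t) := by
    intro ζ
    by_cases hζ : ζ ∈ Ici (0:ℝ)
    · rw [indicator_of_mem hζ, indicator_of_mem (by simpa using hζ)]
    · rw [indicator_of_notMem hζ, indicator_of_notMem (by simpa using hζ)]
  rw [← lintegral_indicator measurableSet_Ici, ← lintegral_indicator measurableSet_Ici]
  simp_rw [key]
  exact lintegral_add_right_eq_self ((Ici t).indicator h) t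

lemma exists_null_superset {f f' : ℝ → ℝ}
    (h : f =ᵐ[volume.restrict (Ici (0:ℝ))] f') :
    ∃ N : Set ℝ, {y : ℝ | f y ≠ f' y} ⊆ N ∧ volume (N ∩ Ici 0) = 0 := by
  obtain ⟨N, hDN, hNm, hN0⟩ := exists_measurable_superset_of_null (ae_iff.mp h)
  exact ⟨N, hDN, by rwa [Measure.restrict_apply hNm] at hN0⟩

lemma ae_shift {f f' : ℝ → ℝ} (hff' : f =ᵐ[volume.restrict (Ici (0:ℝ))] f')
    {t : ℝ} (ht : 0 ≤ t) :
    ∀ᵐ ζ ∂(volume.restrict (Ici (0:ℝ))), f (ζ + t) = f' (ζ + t) := by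
  obtain ⟨N, hDN, hvol⟩ := exists_null_superset hff'
  have h1 : ∀ᵐ ζ ∂(volume : Measure ℝ), ζ + t ∉ N ∩ Ici 0 := by
    have h2 : volume ((fun ζ : ℝ => ζ + t) ⁻¹' (N ∩ Ici 0)) = 0 := by
      rw [measure_preimage_add_right]; exact hvol
    exact measure_eq_zero_iff_ae_notMem.mp h2
  filter_upwards [ae_restrict_of_ae h1, ae_restrict_mem measurableSet_Ici] with ζ h1' h2'
  by_contra hne
  exact h1' ⟨hDN hne, add_nonneg h2' ht⟩

lemma ae_reflect {A : Set ℝ} (hA : volume A = 0) (c : ℝ) :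
    ∀ᵐ s ∂(volume : Measure ℝ), c - s ∉ A := by
  have heq : (fun s : ℝ => c - s) ⁻¹' A = Neg.neg ⁻¹' ((fun y : ℝ => c + y) ⁻¹' A) := by
    ext s; simp [sub_eq_add_neg]
  have hz : volume ((fun s : ℝ => c - s) ⁻¹' A) = 0 := by
    rw [heq, Measure.measure_preimage_neg, measure_preimage_add]; exact hA
  exact measure_eq_zero_iff_ae_notMem.mp hz

lemma eLpNorm_comp_shift (x : ℝ → ℝ) (t : ℝ) :
    eLpNorm (fun ζ => x (ζ + t)) 2 (volume.restrict (Ici (0:ℝ)))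
      = (∫⁻ y in Ici t, (‖x y‖₊ : ℝ≥0∞) ^ (2:ℝ)) ^ (1/2 : ℝ) := by
  rw [eLpNorm_eq_lintegral_rpow_enorm_toReal two_ne_zero ENNReal.ofNat_ne_top, ENNReal.toReal_ofNat]
  exact congrArg (fun z : ℝ≥0∞ => z ^ (1/2 : ℝ))
    (lintegral_shift_Ici (fun y => (‖x y‖₊ : ℝ≥0∞) ^ (2:ℝ)) t)

lemma sq_lintegral_ne_top {f : ℝ → ℝ} {μ : Measure ℝ} (hf : MemLp f 2 μ) :
    ∫⁻ y, (‖f y‖₊ : ℝ≥0∞) ^ (2:ℝ) ∂μ ≠ ∞ := by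
  have h2 := hf.2
  rw [eLpNorm_eq_lintegral_rpow_enorm_toReal two_ne_zero ENNReal.ofNat_ne_top,
    ENNReal.toReal_ofNat] at h2
  intro hcon
  simp only [enorm_eq_nnnorm] at h2
  rw [hcon] at h2
  simp [ENNReal.top_rpow_of_pos] at h2

/-- Let `X = L²([0,∞),ℝ)`, let `𝒰` be the set of essentially bounded
functions eventually exponentially decaying to `0` with the `L^∞`-norm, `b ∈ L²([0,∞),ℝ)`,
and `φ(t,x₀,u)(ζ) = x₀(ζ+t) + ∫₀^t u(s) b(ζ+t−s) ds`. Then (a) `‖φ(t,x₀,0)‖_{L²} ≤ ‖x₀‖_{L²}`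
for all `t ≥ 0`, so the system is zero-input uniformly globally stable, and (b)
`‖φ(t,x₀,u)‖_{L²} → 0` as `t → ∞` for every `(x₀,u) ∈ X × 𝒰`, i.e. the system is of weak
asymptotic gain `0`. -/
theorem shift_system_zugs_and_weakAG_zero
    (b : ℝ → ℝ) (hb : MemLp b 2 (volume.restrict (Ici (0:ℝ)))) :
    ((∀ x₀ : ℝ → ℝ, MemLp x₀ 2 (volume.restrict (Ici (0:ℝ))) → ∀ t : ℝ, 0 ≤ t →
        eLpNorm (shiftFlow b t x₀ (fun _ => 0)) 2 (volume.restrict (Ici (0:ℝ)))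
          ≤ eLpNorm x₀ 2 (volume.restrict (Ici (0:ℝ)))) ∧
      ∃ σ : ℝ → ℝ, ClassK σ ∧
        ∀ x₀ : ℝ → ℝ, MemLp x₀ 2 (volume.restrict (Ici (0:ℝ))) → ∀ t : ℝ, 0 ≤ t →
          (eLpNorm (shiftFlow b t x₀ (fun _ => 0)) 2 (volume.restrict (Ici (0:ℝ)))).toReal
            ≤ σ ((eLpNorm x₀ 2 (volume.restrict (Ici (0:ℝ)))).toReal)) ∧
    (∀ x₀ : ℝ → ℝ, MemLp x₀ 2 (volume.restrict (Ici (0:ℝ))) → ∀ u ∈ ExpDecaySet,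
      Tendsto (fun t : ℝ =>
          (eLpNorm (shiftFlow b t x₀ u) 2 (volume.restrict (Ici (0:ℝ)))).toReal)
        atTop (nhds 0)) := by
  set μ : Measure ℝ := volume.restrict (Ici (0:ℝ)) with hμdef
  -- part (a), first statement
  have parta : ∀ x₀ : ℝ → ℝ, MemLp x₀ 2 μ → ∀ t : ℝ, 0 ≤ t →
      eLpNorm (shiftFlow b t x₀ (fun _ => 0)) 2 μ ≤ eLpNorm x₀ 2 μ := by
    intro x₀ hx₀ t ht
    have hxm := hx₀.1
    set x : ℝ → ℝ := hxm.mk x₀ with hxdef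
    have hxx : x₀ =ᵐ[μ] x := hxm.ae_eq_mk
    have h1 : shiftFlow b t x₀ (fun _ => 0) = fun ζ => x₀ (ζ + t) := by
      funext ζ; simp [shiftFlow]
    have h2 : eLpNorm (fun ζ => x₀ (ζ + t)) 2 μ = eLpNorm (fun ζ => x (ζ + t)) 2 μ :=
      eLpNorm_congr_ae (ae_shift hxx ht)
    have h3 : eLpNorm x₀ 2 μ = eLpNorm x 2 μ := eLpNorm_congr_ae hxx
    rw [h1, h2, h3, eLpNorm_comp_shift x t,
      eLpNorm_eq_lintegral_rpow_enorm_toReal two_ne_zero ENNReal.ofNat_ne_top, ENNReal.toReal_ofNat]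
    apply ENNReal.rpow_le_rpow _ (by norm_num : (0:ℝ) ≤ 1/2)
    calc ∫⁻ y in Ici t, (‖x y‖₊ : ℝ≥0∞) ^ (2:ℝ)
        ≤ ∫⁻ y in Ici (0:ℝ), (‖x y‖₊ : ℝ≥0∞) ^ (2:ℝ) :=
          lintegral_mono_set (Ici_subset_Ici.mpr ht)
      _ = ∫⁻ y, (‖x y‖₊ : ℝ≥0∞) ^ (2:ℝ) ∂μ := rfl
  refine ⟨⟨parta, ?_⟩, ?_⟩
  · refine ⟨id, ⟨continuous_id.continuousOn, fun a _ b _ h => h, rfl, fun r hr => hr⟩, ?_⟩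
    intro x₀ hx₀ t ht
    exact ENNReal.toReal_mono hx₀.2.ne (parta x₀ hx₀ t ht)
  -- part (b)
  intro x₀ hx₀ u hu
  obtain ⟨humem, τ, C, a, hτ0, hC, ha, hdec⟩ := hu
  have hxm := hx₀.1
  set x : ℝ → ℝ := hxm.mk x₀ with hxdef
  have hxsm : StronglyMeasurable x := hxm.stronglyMeasurable_mk
  have hxx : x₀ =ᵐ[μ] x := hxm.ae_eq_mk
  have hbm := hb.1
  set g : ℝ → ℝ := hbm.mk b with hgdef
  have hgsm : StronglyMeasurable g := hbm.stronglyMeasurable_mk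
  have hbg : b =ᵐ[μ] g := hbm.ae_eq_mk
  have humm := humem.1
  set u' : ℝ → ℝ := humm.mk u with hudef
  have husm : StronglyMeasurable u' := humm.stronglyMeasurable_mk
  have huu : u =ᵐ[μ] u' := humm.ae_eq_mk
  obtain ⟨Nu, hNu, hNuvol⟩ := exists_null_superset huu
  obtain ⟨Nb, hNb, hNbvol⟩ := exists_null_superset hbg
  set V : ℝ → ℝ≥0∞ := fun s => (‖u' s‖₊ : ℝ≥0∞) with hVdef
  have hVm : Measurable V := husm.measurable.nnnorm.coe_nnreal_ennreal
  set W2 : ℝ → ℝ≥0∞ := fun y => (‖g y‖₊ : ℝ≥0∞) ^ (2:ℝ) with hW2def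
  have hW2m : Measurable W2 := (hgsm.measurable.nnnorm.coe_nnreal_ennreal).pow_const _
  set X2 : ℝ → ℝ≥0∞ := fun y => (‖x y‖₊ : ℝ≥0∞) ^ (2:ℝ) with hX2def
  set A0 : ℝ≥0∞ := ∫⁻ s, V s ∂μ with hA0def
  set AV : ℝ → ℝ≥0∞ := fun r => ∫⁻ s in Ici r, V s ∂μ with hAVdef
  set TG : ℝ → ℝ≥0∞ := fun r => ∫⁻ y in Ici r, W2 y ∂μ with hTGdef
  set TX : ℝ → ℝ≥0∞ := fun r => ∫⁻ y in Ici r, X2 y ∂μ with hTXdef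
  have hres : ∀ A : Set ℝ, MeasurableSet A → A ⊆ Ici 0 →
      μ.restrict A = volume.restrict A := by
    intro A hA hsub
    rw [hμdef, Measure.restrict_restrict hA, inter_eq_left.mpr hsub]
  -- finiteness facts
  have hW2fin : ∫⁻ y, W2 y ∂μ ≠ ∞ := by
    have hcongr : ∫⁻ y, W2 y ∂μ = ∫⁻ y, (‖b y‖₊ : ℝ≥0∞) ^ (2:ℝ) ∂μ := by
      apply lintegral_congr_ae
      filter_upwards [hbg] with y hy
      rw [hW2def]; simp only []; rw [← hy]
    rw [hcongr]
    exact sq_lintegral_ne_top hb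
  have hX2fin : ∫⁻ y, X2 y ∂μ ≠ ∞ := by
    have hcongr : ∫⁻ y, X2 y ∂μ = ∫⁻ y, (‖x₀ y‖₊ : ℝ≥0∞) ^ (2:ℝ) ∂μ := by
      apply lintegral_congr_ae
      filter_upwards [hxx] with y hy
      rw [hX2def]; simp only []; rw [← hy]
    rw [hcongr]
    exact sq_lintegral_ne_top hx₀
  have hTG0 : TG 0 ≠ ∞ := ne_top_of_le_ne_top hW2fin (setLIntegral_le_lintegral _ _)
  have hVu : ∀ᵐ s ∂μ, V s = (‖u s‖₊ : ℝ≥0∞) := by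
    filter_upwards [huu] with s hs
    rw [hVdef]; simp only []; rw [← hs]
  have hMfin : eLpNormEssSup u μ < ∞ := by
    have h := humem.2; rwa [eLpNorm_exponent_top] at h
  have hA0fin : A0 ≠ ∞ := by
    have hsplit : A0 ≤ (∫⁻ s in Iio τ, V s ∂μ) + ∫⁻ s in Ici τ, V s ∂μ := by
      rw [hA0def]
      calc ∫⁻ s, V s ∂μ = ∫⁻ s in Iio τ ∪ Ici τ, V s ∂μ := by
            rw [Iio_union_Ici, Measure.restrict_univ]
        _ ≤ _ := lintegral_union_le _ _ _
    have h1 : (∫⁻ s in Iio τ, V s ∂μ) < ∞ := by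
      have hb1 : ∀ᵐ s ∂(μ.restrict (Iio τ)), V s ≤ eLpNormEssSup u μ := by
        apply ae_restrict_of_ae
        filter_upwards [hVu, ae_le_eLpNormEssSup (f := u) (μ := μ)] with s h h'
        rw [h]; exact h'
      have hμIio : μ (Iio τ) < ∞ := by
        rw [hμdef, Measure.restrict_apply measurableSet_Iio]
        refine lt_of_le_of_lt (measure_mono (show Iio τ ∩ Ici 0 ⊆ Icc 0 τ from fun y hy => ⟨hy.2, hy.1.le⟩)) ?_
        rw [Real.volume_Icc]; exact ENNReal.ofReal_lt_top
      calc ∫⁻ s in Iio τ, V s ∂μ ≤ ∫⁻ _ in Iio τ, eLpNormEssSup u μ ∂μ :=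
            lintegral_mono_ae hb1
        _ = eLpNormEssSup u μ * μ (Iio τ) := setLIntegral_const _ _
        _ < ∞ := ENNReal.mul_lt_top hMfin hμIio
    have h2 : (∫⁻ s in Ici τ, V s ∂μ) < ∞ := by
      have hμres : μ.restrict (Ici τ) = volume.restrict (Ici τ) :=
        hres (Ici τ) measurableSet_Ici (Ici_subset_Ici.mpr hτ0)
      have hint : IntegrableOn (fun s => C * Real.exp (-a * s)) (Ici τ) volume := by
        rw [integrableOn_Ici_iff_integrableOn_Ioi]
        exact (exp_neg_integrableOn_Ioi τ ha).const_mul C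
      have hnn : 0 ≤ᵐ[volume.restrict (Ici τ)] fun s => C * Real.exp (-a * s) :=
        ae_of_all _ fun s => mul_nonneg hC.le (Real.exp_pos _).le
      have hνae : ∀ᵐ s ∂(volume.restrict (Ici τ)), V s = (‖u s‖₊ : ℝ≥0∞) := by
        rw [← hμres]; exact ae_restrict_of_ae hVu
      calc ∫⁻ s in Ici τ, V s ∂μ = ∫⁻ s in Ici τ, V s ∂volume := by rw [hμres]
        _ = ∫⁻ s in Ici τ, (‖u s‖₊ : ℝ≥0∞) ∂volume := lintegral_congr_ae hνae
        _ ≤ ∫⁻ s in Ici τ, ENNReal.ofReal (C * Real.exp (-a * s)) ∂volume := by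
            apply setLIntegral_mono' measurableSet_Ici
            intro s hs
            rw [← enorm_eq_nnnorm, Real.enorm_eq_ofReal_abs]
            exact ENNReal.ofReal_le_ofReal (hdec s hs)
        _ = ENNReal.ofReal (∫ s in Ici τ, C * Real.exp (-a * s)) :=
            (ofReal_integral_eq_lintegral_ofReal hint hnn).symm
        _ < ∞ := ENNReal.ofReal_lt_top
    exact (lt_of_le_of_lt hsplit (ENNReal.add_lt_top.mpr ⟨h1, h2⟩)).ne
  -- tail limits
  have hTXtendsto : Tendsto TX atTop (𝓝 0) := tail_lintegral_tendsto X2 hX2fin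
  have hTGtendsto : Tendsto TG atTop (𝓝 0) := tail_lintegral_tendsto W2 hW2fin
  have hAVtendsto : Tendsto AV atTop (𝓝 0) := tail_lintegral_tendsto V hA0fin
  have hVsub : ∀ A : Set ℝ, MeasurableSet A → A ⊆ Ici 0 →
      (∫⁻ s in A, V s ∂volume) ≤ A0 := by
    intro A hA hsub
    rw [← hres A hA hsub, hA0def]
    exact setLIntegral_le_lintegral _ _
  have hTGv : ∀ r : ℝ, 0 ≤ r → (∫⁻ y in Ici r, W2 y) = TG r := by
    intro r hr
    rw [hTGdef, ← hres (Ici r) measurableSet_Ici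
      (Ici_subset_Ici.mpr hr)]
  -- main quantitative bound
  have main : ∀ t : ℝ, 0 ≤ t →
      eLpNorm (shiftFlow b t x₀ u) 2 μ
        ≤ TX t ^ (1/2:ℝ) + (A0 * (TG (t/2) * A0 + TG 0 * AV (t/2))) ^ (1/2:ℝ) := by
    intro t ht
    set F : ℝ → ℝ := fun ζ => ∫ s in (0:ℝ)..t, u' s * g (ζ + t - s) with hFdef
    have hFIoc : ∀ ζ : ℝ, F ζ = ∫ s in Ioc (0:ℝ) t, u' s * g (ζ + t - s) ∂volume := by
      intro ζ; rw [hFdef]; exact intervalIntegral.integral_of_le ht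
    have hint_eq : ∀ ζ : ℝ, 0 ≤ ζ →
        (∫ s in (0:ℝ)..t, u s * b (ζ + t - s)) = F ζ := by
      intro ζ hζ
      apply intervalIntegral.integral_congr_ae
      filter_upwards [measure_eq_zero_iff_ae_notMem.mp hNuvol, ae_reflect hNbvol (ζ + t)]
        with s hsu hsb hs
      rw [uIoc_of_le ht, mem_Ioc] at hs
      have hu_eq : u s = u' s := by
        by_contra hne
        exact hsu ⟨hNu hne, hs.1.le⟩
      have hb_eq : b (ζ + t - s) = g (ζ + t - s) := by
        by_contra hne
        refine hsb ⟨hNb hne, ?_⟩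
        simp only [mem_Ici]
        linarith [hs.2]
      rw [hu_eq, hb_eq]
    have hflow : shiftFlow b t x₀ u =ᵐ[μ] (fun ζ => x (ζ + t)) + F := by
      filter_upwards [ae_shift hxx ht, ae_restrict_mem measurableSet_Ici] with ζ h1 h2
      show x₀ (ζ + t) + _ = x (ζ + t) + F ζ
      rw [h1, hint_eq ζ h2]
    have hFsm : StronglyMeasurable F := by
      have heq : F = fun ζ => ∫ s, (fun p : ℝ × ℝ => u' p.2 * g (p.1 + t - p.2)) (ζ, s)
          ∂(volume.restrict (Ioc (0:ℝ) t)) := by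
        funext ζ; exact hFIoc ζ
      have hps : StronglyMeasurable (fun p : ℝ × ℝ => u' p.2 * g (p.1 + t - p.2)) :=
        (husm.comp_measurable measurable_snd).mul
          (hgsm.comp_measurable ((measurable_fst.add_const t).sub measurable_snd))
      have hint := MeasureTheory.StronglyMeasurable.integral_prod_right'
        (ν := volume.restrict (Ioc (0:ℝ) t))
        (f := fun p : ℝ × ℝ => u' p.2 * g (p.1 + t - p.2)) hps
      rw [heq]
      exact hint
    have htri : eLpNorm (shiftFlow b t x₀ u) 2 μ
        ≤ eLpNorm (fun ζ => x (ζ + t)) 2 μ + eLpNorm F 2 μ := by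
      rw [eLpNorm_congr_ae hflow]
      exact eLpNorm_add_le
        ((hxsm.comp_measurable (measurable_add_const t)).aestronglyMeasurable)
        hFsm.aestronglyMeasurable one_le_two
    have hshift : eLpNorm (fun ζ => x (ζ + t)) 2 μ = TX t ^ (1/2:ℝ) := by
      rw [eLpNorm_comp_shift x t, hTXdef, ← hres (Ici t) measurableSet_Ici
        (Ici_subset_Ici.mpr ht)]
    -- the forcing term
    have hD1 : ∀ ζ : ℝ, (‖F ζ‖₊ : ℝ≥0∞)
        ≤ ∫⁻ s in Ioc (0:ℝ) t, V s * (‖g (ζ + t - s)‖₊ : ℝ≥0∞) ∂volume := by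
      intro ζ
      rw [hFIoc ζ]
      refine le_trans (enorm_integral_le_lintegral_enorm _) (le_of_eq ?_)
      apply lintegral_congr
      intro s
      rw [enorm_mul, enorm_eq_nnnorm, enorm_eq_nnnorm]
    have hconj : (2:ℝ).HolderConjugate 2 := Real.holderConjugate_iff.mpr ⟨one_lt_two, by norm_num⟩
    have hhalf : ∀ e : ℝ≥0∞, e ^ (1/2:ℝ) * e ^ (1/2:ℝ) = e := by
      intro e
      rw [← ENNReal.rpow_add_of_nonneg _ _ (by norm_num) (by norm_num)]
      norm_num
    have hhalfsq : ∀ e : ℝ≥0∞, (e ^ (1/2:ℝ)) ^ (2:ℝ) = e := by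
      intro e
      rw [← ENNReal.rpow_mul]
      norm_num
    have hD2 : ∀ ζ : ℝ,
        (∫⁻ s in Ioc (0:ℝ) t, V s * (‖g (ζ + t - s)‖₊ : ℝ≥0∞) ∂volume) ^ (2:ℝ)
          ≤ (∫⁻ s in Ioc (0:ℝ) t, V s ∂volume)
            * ∫⁻ s in Ioc (0:ℝ) t, V s * W2 (ζ + t - s) ∂volume := by
      intro ζ
      set ν := volume.restrict (Ioc (0:ℝ) t) with hνdef
      have hgm2 : Measurable fun s : ℝ => (‖g (ζ + t - s)‖₊ : ℝ≥0∞) :=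
        ((hgsm.measurable.comp (measurable_const.sub measurable_id)).nnnorm).coe_nnreal_ennreal
      have hf : AEMeasurable (fun s => V s ^ (1/2:ℝ)) ν := (hVm.pow_const _).aemeasurable
      have hgm : AEMeasurable
          (fun s => V s ^ (1/2:ℝ) * (‖g (ζ + t - s)‖₊ : ℝ≥0∞)) ν :=
        ((hVm.pow_const _).mul hgm2).aemeasurable
      have key := ENNReal.lintegral_mul_le_Lp_mul_Lq ν hconj hf hgm
      have lhs_eq : (∫⁻ s, ((fun s => V s ^ (1/2:ℝ)) *
            fun s => V s ^ (1/2:ℝ) * (‖g (ζ + t - s)‖₊ : ℝ≥0∞)) s ∂ν)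
          = ∫⁻ s, V s * (‖g (ζ + t - s)‖₊ : ℝ≥0∞) ∂ν := by
        apply lintegral_congr
        intro s
        simp only [Pi.mul_apply]
        rw [← mul_assoc, hhalf]
      have rhs1 : (∫⁻ s, ((fun s => V s ^ (1/2:ℝ)) s) ^ (2:ℝ) ∂ν) = ∫⁻ s, V s ∂ν := by
        apply lintegral_congr
        intro s
        exact hhalfsq _
      have rhs2 : (∫⁻ s, ((fun s => V s ^ (1/2:ℝ) * (‖g (ζ + t - s)‖₊ : ℝ≥0∞)) s) ^ (2:ℝ) ∂ν)
          = ∫⁻ s, V s * W2 (ζ + t - s) ∂ν := by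
        apply lintegral_congr
        intro s
        simp only []
        rw [ENNReal.mul_rpow_of_nonneg _ _ (by norm_num : (0:ℝ) ≤ 2), hhalfsq]
      rw [lhs_eq, rhs1, rhs2] at key
      calc (∫⁻ s, V s * (‖g (ζ + t - s)‖₊ : ℝ≥0∞) ∂ν) ^ (2:ℝ)
          ≤ ((∫⁻ s, V s ∂ν) ^ (1/(2:ℝ)) * (∫⁻ s, V s * W2 (ζ + t - s) ∂ν) ^ (1/(2:ℝ))) ^ (2:ℝ) :=
            ENNReal.rpow_le_rpow key (by norm_num)
        _ = _ := by
            rw [ENNReal.mul_rpow_of_nonneg _ _ (by norm_num : (0:ℝ) ≤ 2), hhalfsq, hhalfsq]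
    have hIocsub : Ioc (0:ℝ) t ⊆ Ici 0 := fun s hs => hs.1.le
    have hVIoc : (∫⁻ s in Ioc (0:ℝ) t, V s ∂volume) ≤ A0 := hVsub _ measurableSet_Ioc hIocsub
    have hVIocfin : (∫⁻ s in Ioc (0:ℝ) t, V s ∂volume) ≠ ∞ := ne_top_of_le_ne_top hA0fin hVIoc
    have hswap : (∫⁻ ζ, (∫⁻ s in Ioc (0:ℝ) t, V s * W2 (ζ + t - s) ∂volume) ∂μ)
        = ∫⁻ s in Ioc (0:ℝ) t, (∫⁻ ζ, V s * W2 (ζ + t - s) ∂μ) ∂volume := by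
      apply lintegral_lintegral_swap
      exact ((hVm.comp measurable_snd).mul
        (hW2m.comp ((measurable_fst.add_const t).sub measurable_snd))).aemeasurable
    have hinner : ∀ s : ℝ, (∫⁻ ζ, V s * W2 (ζ + t - s) ∂μ)
        = V s * ∫⁻ y in Ici (t - s), W2 y := by
      intro s
      rw [lintegral_const_mul' _ _ ENNReal.coe_ne_top]
      congr 1
      have harg : ∀ ζ : ℝ, W2 (ζ + t - s) = W2 (ζ + (t - s)) := fun ζ => by
        rw [add_sub_assoc]
      calc (∫⁻ ζ, W2 (ζ + t - s) ∂μ) = ∫⁻ ζ in Ici (0:ℝ), W2 (ζ + (t - s)) ∂volume := by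
            rw [hμdef]; exact lintegral_congr fun ζ => by rw [harg]
        _ = ∫⁻ y in Ici (t - s), W2 y := lintegral_shift_Ici W2 (t - s)
    have hTGhalf : TG (t/2) ≠ ∞ := ne_top_of_le_ne_top hW2fin (setLIntegral_le_lintegral _ _)
    have hS : (∫⁻ s in Ioc (0:ℝ) t, V s * (∫⁻ y in Ici (t - s), W2 y) ∂volume)
        ≤ TG (t/2) * A0 + TG 0 * AV (t/2) := by
      have hsplitset : Ioc (0:ℝ) t = Ioc 0 (t/2) ∪ Ioc (t/2) t :=
        (Ioc_union_Ioc_eq_Ioc (by linarith) (by linarith)).symm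
      rw [hsplitset]
      refine le_trans (lintegral_union_le _ _ _) (add_le_add ?_ ?_)
      · have hbd : ∀ s ∈ Ioc (0:ℝ) (t/2),
            V s * (∫⁻ y in Ici (t - s), W2 y) ≤ V s * TG (t/2) := by
          intro s hs
          apply mul_le_mul_right
          calc (∫⁻ y in Ici (t - s), W2 y) ≤ ∫⁻ y in Ici (t/2), W2 y :=
              lintegral_mono_set (Ici_subset_Ici.mpr (by linarith [hs.2]))
            _ = TG (t/2) := hTGv _ (by linarith)
        calc (∫⁻ s in Ioc (0:ℝ) (t/2), V s * (∫⁻ y in Ici (t - s), W2 y) ∂volume)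
            ≤ ∫⁻ s in Ioc (0:ℝ) (t/2), V s * TG (t/2) ∂volume :=
              setLIntegral_mono' measurableSet_Ioc hbd
          _ = (∫⁻ s in Ioc (0:ℝ) (t/2), V s ∂volume) * TG (t/2) :=
              lintegral_mul_const' _ _ hTGhalf
          _ ≤ A0 * TG (t/2) := mul_le_mul_left
              (hVsub _ measurableSet_Ioc fun s hs => hs.1.le) _
          _ = TG (t/2) * A0 := mul_comm _ _
      · have hbd : ∀ s ∈ Ioc (t/2) t,
            V s * (∫⁻ y in Ici (t - s), W2 y) ≤ V s * TG 0 := by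
          intro s hs
          apply mul_le_mul_right
          calc (∫⁻ y in Ici (t - s), W2 y) ≤ ∫⁻ y in Ici (0:ℝ), W2 y :=
              lintegral_mono_set (Ici_subset_Ici.mpr (by linarith [hs.2]))
            _ = TG 0 := hTGv 0 le_rfl
        calc (∫⁻ s in Ioc (t/2) t, V s * (∫⁻ y in Ici (t - s), W2 y) ∂volume)
            ≤ ∫⁻ s in Ioc (t/2) t, V s * TG 0 ∂volume :=
              setLIntegral_mono' measurableSet_Ioc hbd
          _ = (∫⁻ s in Ioc (t/2) t, V s ∂volume) * TG 0 :=
              lintegral_mul_const' _ _ hTG0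
          _ ≤ AV (t/2) * TG 0 := by
              apply mul_le_mul_left
              rw [hAVdef, ← hres (Ioc (t/2) t) measurableSet_Ioc
                (fun s hs => le_trans (by linarith) hs.1.le)]
              exact lintegral_mono_set fun s hs => hs.1.le
          _ = TG 0 * AV (t/2) := mul_comm _ _
    have hF2 : (∫⁻ ζ, (‖F ζ‖₊ : ℝ≥0∞) ^ (2:ℝ) ∂μ)
        ≤ A0 * (TG (t/2) * A0 + TG 0 * AV (t/2)) := by
      calc (∫⁻ ζ, (‖F ζ‖₊ : ℝ≥0∞) ^ (2:ℝ) ∂μ)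
          ≤ ∫⁻ ζ, ((∫⁻ s in Ioc (0:ℝ) t, V s ∂volume)
              * ∫⁻ s in Ioc (0:ℝ) t, V s * W2 (ζ + t - s) ∂volume) ∂μ := by
            apply lintegral_mono
            intro ζ
            exact le_trans (ENNReal.rpow_le_rpow (hD1 ζ) (by norm_num)) (hD2 ζ)
        _ = (∫⁻ s in Ioc (0:ℝ) t, V s ∂volume)
              * ∫⁻ ζ, (∫⁻ s in Ioc (0:ℝ) t, V s * W2 (ζ + t - s) ∂volume) ∂μ :=
            lintegral_const_mul' _ _ hVIocfin
        _ = (∫⁻ s in Ioc (0:ℝ) t, V s ∂volume)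
              * ∫⁻ s in Ioc (0:ℝ) t, (∫⁻ ζ, V s * W2 (ζ + t - s) ∂μ) ∂volume := by
            rw [hswap]
        _ = (∫⁻ s in Ioc (0:ℝ) t, V s ∂volume)
              * ∫⁻ s in Ioc (0:ℝ) t, V s * (∫⁻ y in Ici (t - s), W2 y) ∂volume := by
            congr 1
            exact lintegral_congr fun s => hinner s
        _ ≤ A0 * (TG (t/2) * A0 + TG 0 * AV (t/2)) := mul_le_mul' hVIoc hS
    have hFnorm : eLpNorm F 2 μ ≤ (A0 * (TG (t/2) * A0 + TG 0 * AV (t/2))) ^ (1/2:ℝ) := by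
      rw [eLpNorm_eq_lintegral_rpow_enorm_toReal two_ne_zero ENNReal.ofNat_ne_top, ENNReal.toReal_ofNat]
      exact ENNReal.rpow_le_rpow hF2 (by norm_num)
    refine le_trans htri ?_
    rw [hshift]
    exact add_le_add_right hFnorm _
  -- limits
  have hhalf2 : Tendsto (fun t : ℝ => t/2) atTop atTop :=
    tendsto_id.atTop_div_const two_pos
  have hzero_rpow : ((0:ℝ≥0∞) ^ (1/2:ℝ)) = 0 := ENNReal.zero_rpow_of_pos (by norm_num)
  have h1 : Tendsto (fun t : ℝ => TX t ^ (1/2:ℝ)) atTop (𝓝 0) := by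
    have h := ((ENNReal.continuous_rpow_const (y := (1/2:ℝ))).tendsto (0:ℝ≥0∞)).comp hTXtendsto
    simpa [Function.comp_def, hzero_rpow] using h
  have h2 : Tendsto (fun t : ℝ =>
      (A0 * (TG (t/2) * A0 + TG 0 * AV (t/2))) ^ (1/2:ℝ)) atTop (𝓝 0) := by
    have h2a : Tendsto (fun t : ℝ => TG (t/2) * A0) atTop (𝓝 0) := by
      have := ENNReal.Tendsto.mul_const (hTGtendsto.comp hhalf2) (Or.inr hA0fin)
      simpa [Function.comp_def] using this
    have h2b : Tendsto (fun t : ℝ => TG 0 * AV (t/2)) atTop (𝓝 0) := by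
      have := ENNReal.Tendsto.const_mul (a := TG 0) (hAVtendsto.comp hhalf2) (Or.inr hTG0)
      simpa [Function.comp_def] using this
    have h2c : Tendsto (fun t : ℝ => A0 * (TG (t/2) * A0 + TG 0 * AV (t/2))) atTop (𝓝 0) := by
      have hsum := h2a.add h2b
      simp only [add_zero] at hsum
      have := ENNReal.Tendsto.const_mul (a := A0) hsum (Or.inr hA0fin)
      simpa using this
    have h := ((ENNReal.continuous_rpow_const (y := (1/2:ℝ))).tendsto (0:ℝ≥0∞)).comp h2c
    simpa [Function.comp_def, hzero_rpow] using h
  have hfinal : Tendsto (fun t : ℝ => eLpNorm (shiftFlow b t x₀ u) 2 μ) atTop (𝓝 0) := by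
    have hsum := h1.add h2
    simp only [add_zero] at hsum
    apply tendsto_of_tendsto_of_tendsto_of_le_of_le' tendsto_const_nhds hsum
    · exact Eventually.of_forall fun t => zero_le
    · filter_upwards [eventually_ge_atTop (0:ℝ)] with t ht
      exact main t ht
  have htr := (ENNReal.tendsto_toReal (a := 0) (by simp)).comp hfinal
  simpa [Function.comp_def] using htr
end
end

section
/- Let X, U be Hilbert spaces, let 𝔖 = (X,𝒰,φ) be a dynamical system with inputs with 0 ∈ 𝒰 and ‖0‖_𝒰 = 0, let B ∈ L(U,X) with B ≠ 0 and adjoint B* ∈ L(X,U), let D be a dense subset of X, and let (S_t)_{t≥0} be a C₀-semigroup on X that is strongly stable but not exponentially stable. Suppose that for every x₀ ∈ D with sup_{t≥0} ‖B* φ(t,x₀,0)‖ ≤ 1 one has φ(t,x₀,0) = S_t x₀ for all t ≥ 0. Then 𝔖 is NOT uniformly input-to-state stable. -/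
open MeasureTheory Filter Set Topology
open scoped ENNReal NNReal

noncomputable section

variable {X U : Type*} [NormedAddCommGroup X]

/-- If a continuous linear operator is bounded by `C` on the intersection of a dense set with
the closed ball of radius `δ`, then its operator norm is at most `2 * C / δ`. -/
private lemma dense_opNorm_le {X' : Type*} [NormedAddCommGroup X'] [NormedSpace ℝ X']
    {D : Set X'} (hD : Dense D) (T : X' →L[ℝ] X') {δ C : ℝ} (hδ : 0 < δ) (hC : 0 ≤ C)
    (h : ∀ y ∈ D, ‖y‖ ≤ δ → ‖T y‖ ≤ C) : ‖T‖ ≤ 2 * C / δ := by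
  -- first extend the pointwise bound to the open ball by density
  have hball : ∀ x : X', ‖x‖ < δ → ‖T x‖ ≤ C := by
    intro x hx
    refine le_of_forall_pos_le_add fun ε hε => ?_
    have hTpos : (0:ℝ) < ‖T‖ + 1 := by positivity
    obtain ⟨y, hyD, hy⟩ := Metric.mem_closure_iff.1 (hD x)
      (min (ε / (‖T‖ + 1)) (δ - ‖x‖)) (lt_min (by positivity) (by linarith))
    have hxy : ‖x - y‖ < min (ε / (‖T‖ + 1)) (δ - ‖x‖) := by rwa [dist_eq_norm] at hy
    have hxy1 : ‖x - y‖ ≤ ε / (‖T‖ + 1) := (hxy.trans_le (min_le_left _ _)).le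
    have hxy2 : ‖x - y‖ < δ - ‖x‖ := hxy.trans_le (min_le_right _ _)
    have hy1 : ‖y‖ ≤ δ := by
      have h1 : ‖y‖ - ‖x‖ ≤ ‖y - x‖ := norm_sub_norm_le y x
      have h2 : ‖y - x‖ = ‖x - y‖ := norm_sub_rev y x
      linarith
    have hTy : ‖T y‖ ≤ C := h y hyD hy1
    have hT2 : ‖T (x - y)‖ ≤ ‖T‖ * ‖x - y‖ := T.le_opNorm _
    have hT3 : ‖T‖ * ‖x - y‖ ≤ ε := by
      have h4 : ‖T‖ * ‖x - y‖ ≤ (‖T‖ + 1) * (ε / (‖T‖ + 1)) := by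
        have := mul_le_mul (le_add_of_nonneg_right (zero_le_one)) hxy1
          (norm_nonneg _) hTpos.le
        simpa using this
      have h5 : (‖T‖ + 1) * (ε / (‖T‖ + 1)) = ε := by field_simp
      linarith
    have hTx : ‖T x‖ ≤ ‖T y‖ + ‖T (x - y)‖ := by
      calc ‖T x‖ = ‖T (y + (x - y))‖ := by rw [show y + (x - y) = x by abel]
        _ = ‖T y + T (x - y)‖ := by rw [map_add]
        _ ≤ ‖T y‖ + ‖T (x - y)‖ := norm_add_le _ _
    linarith
  -- now scale to get the operator norm bound
  refine ContinuousLinearMap.opNorm_le_bound T (by positivity) fun x => ?_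
  rcases eq_or_ne x 0 with rfl | hx0
  · simp
  · have hxpos : (0:ℝ) < ‖x‖ := norm_pos_iff.2 hx0
    set a : ℝ := (δ / 2) / ‖x‖ with ha
    have hapos : 0 < a := by positivity
    have hax : ‖a • x‖ = δ / 2 := by
      rw [norm_smul, Real.norm_eq_abs, abs_of_pos hapos, ha, div_mul_cancel₀ _ hxpos.ne']
    have hb := hball (a • x) (by rw [hax]; linarith)
    rw [T.map_smul, norm_smul, Real.norm_eq_abs, abs_of_pos hapos] at hb
    have h1 : ‖T x‖ ≤ C / a := by
      rw [le_div_iff₀ hapos, mul_comm]; exact hb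
    have haval : C / a = 2 * C / δ * ‖x‖ := by
      rw [ha]; field_simp
    linarith [haval ▸ h1]

set_option maxHeartbeats 1000000 in
/-- **Section 4.3.** Let `X`, `U` be Hilbert spaces, `𝔖 = (X,𝒰,φ)` a dynamical
system with inputs with `0 ∈ 𝒰` (of zero norm), `B ∈ L(U,X) \ {0}`, `D ⊆ X` dense, and
`(S_t)` a strongly stable but not exponentially stable `C₀`-semigroup on `X`. If for every
`x₀ ∈ D` with `sup_{t ≥ 0} ‖B^* φ(t,x₀,0)‖ ≤ 1` one has `φ(t,x₀,0) = S_t x₀` for all `t ≥ 0`,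
then `𝔖` is not uniformly input-to-state stable. -/
theorem semilinear_not_uniformISS
    {X' U' : Type*}
    [NormedAddCommGroup X'] [InnerProductSpace ℝ X'] [CompleteSpace X']
    [NormedAddCommGroup U'] [InnerProductSpace ℝ U'] [CompleteSpace U']
    (S : DynSysWithInputs X' U')
    (hz : (fun _ : ℝ => (0 : U')) ∈ S.inputs)
    (hznorm : S.inNorm (fun _ : ℝ => (0 : U')) = 0)
    (B : U' →L[ℝ] X') (hB : B ≠ 0)
    (D : Set X') (hD : Dense D)
    (Sem : ℝ → X' →L[ℝ] X')
    (hSem0 : Sem 0 = ContinuousLinearMap.id ℝ X')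
    (hSemAdd : ∀ s t : ℝ, 0 ≤ s → 0 ≤ t → Sem (t + s) = (Sem t).comp (Sem s))
    (hSemCont : ∀ x : X', ContinuousOn (fun t => Sem t x) (Ici 0))
    (hSemStab : ∀ x : X', Tendsto (fun t => Sem t x) atTop (nhds 0))
    (hSemNotExp : ¬ ∃ M ω : ℝ, 0 < M ∧ 0 < ω ∧
      ∀ t : ℝ, 0 ≤ t → ‖Sem t‖ ≤ M * Real.exp (-ω * t))
    (hflow : ∀ x₀ ∈ D,
      (∀ t : ℝ, 0 ≤ t →
        ‖(ContinuousLinearMap.adjoint B) (S.flow t x₀ (fun _ : ℝ => (0 : U')))‖ ≤ 1) →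
      ∀ t : ℝ, 0 ≤ t → S.flow t x₀ (fun _ : ℝ => (0 : U')) = Sem t x₀) :
    ¬ UniformISS S := by
  rintro ⟨⟨σf, γf, hσK, hγK, hUGS⟩, γ', hγ'K, hAG⟩
  set u0 : ℝ → U' := (fun _ : ℝ => (0 : U')) with hu0
  set Bs : X' →L[ℝ] U' := ContinuousLinearMap.adjoint B with hBs
  have hγ0 : γf (S.inNorm u0) = 0 := by rw [hznorm]; exact hγK.2.2.1
  have hγ'0 : γ' (S.inNorm u0) = 0 := by
    rw [hznorm]
    rcases hγ'K with h | h
    · exact h.2.2.1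
    · exact h 0
  have hBsnorm : ‖Bs‖ = ‖B‖ := LinearIsometryEquiv.norm_map _ B
  have hBspos : 0 < ‖Bs‖ := by rw [hBsnorm]; exact norm_pos_iff.2 hB
  set c : ℝ := ‖Bs‖⁻¹ with hc
  have hcpos : 0 < c := inv_pos.2 hBspos
  -- get δ from continuity of σ at 0
  have hσc : ContinuousWithinAt σf (Ici 0) 0 := hσK.1 0 self_mem_Ici
  obtain ⟨δ, hδpos, hδ⟩ := Metric.continuousWithinAt_iff.1 hσc c hcpos
  set δ' : ℝ := δ / 2 with hδ'
  have hδ'pos : 0 < δ' := by positivity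
  have hσsmall : ∀ s : ℝ, 0 ≤ s → s ≤ δ' → σf s < c := by
    intro s hs hs'
    have h1 : dist s 0 < δ := by
      rw [Real.dist_eq, sub_zero, abs_of_nonneg hs]; linarith
    have h2 := hδ (mem_Ici.2 hs) h1
    rw [hσK.2.2.1, Real.dist_eq, sub_zero, abs_of_nonneg (hσK.2.2.2 s hs)] at h2
    exact h2
  -- the flow with zero input is bounded by σ
  have hflowbd : ∀ (x₀ : X') (t : ℝ), 0 ≤ t → ‖S.flow t x₀ u0‖ ≤ σf ‖x₀‖ := by
    intro x₀ t ht
    have := hUGS x₀ u0 hz t ht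
    rwa [hγ0, add_zero] at this
  -- on small elements of D, flow agrees with semigroup
  have step1 : ∀ x₀ ∈ D, ‖x₀‖ ≤ δ' → ∀ t : ℝ, 0 ≤ t → S.flow t x₀ u0 = Sem t x₀ := by
    intro x₀ hxD hxn
    refine hflow x₀ hxD fun t ht => ?_
    have h1 : ‖Bs (S.flow t x₀ u0)‖ ≤ ‖Bs‖ * ‖S.flow t x₀ u0‖ := Bs.le_opNorm _
    have h2 := hflowbd x₀ t ht
    have h3 : σf ‖x₀‖ ≤ c := (hσsmall _ (norm_nonneg _) hxn).le
    have h4 : ‖Bs‖ * ‖S.flow t x₀ u0‖ ≤ ‖Bs‖ * c :=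
      mul_le_mul_of_nonneg_left (h2.trans h3) hBspos.le
    have h5 : ‖Bs‖ * c = 1 := mul_inv_cancel₀ hBspos.ne'
    linarith
  -- uniform boundedness of the semigroup
  have hbdall : ∀ t : ℝ, 0 ≤ t → ‖Sem t‖ ≤ 2 * c / δ' := by
    intro t ht
    refine dense_opNorm_le hD (Sem t) hδ'pos hcpos.le fun y hyD hy => ?_
    rw [← step1 y hyD hy t ht]
    exact (hflowbd y t ht).trans (hσsmall _ (norm_nonneg _) hy).le
  -- the uniform asymptotic gain gives a time at which the semigroup is a contraction
  obtain ⟨τ, hτ0, hτ⟩ := hAG (δ' / 8) (by positivity) δ' hδ'pos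
  have hcontr : ∀ t : ℝ, τ ≤ t → ‖Sem t‖ ≤ 1 / 2 := by
    intro t ht
    have ht0 : 0 ≤ t := hτ0.trans ht
    have h := dense_opNorm_le hD (Sem t) hδ'pos (by positivity : (0:ℝ) ≤ δ' / 8)
      (fun y hyD hy => by
        rw [← step1 y hyD hy t ht0]
        have := hτ t ht y hy u0 hz
        rwa [hγ'0, add_zero] at this)
    have heq : 2 * (δ' / 8) / δ' = 1 / 4 := by field_simp; ring
    rw [heq] at h
    linarith
  set t₀ : ℝ := max τ 1 with ht₀
  have ht₀pos : (0:ℝ) < t₀ := lt_of_lt_of_le one_pos (le_max_right _ _)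
  have hSemt₀ : ‖Sem t₀‖ ≤ 1 / 2 := hcontr t₀ (le_max_left _ _)
  set M₁ : ℝ := max (2 * c / δ') 1 with hM₁
  have hM₁ge : (1:ℝ) ≤ M₁ := le_max_right _ _
  -- induction: geometric decay
  have hind : ∀ n : ℕ, ∀ s : ℝ, 0 ≤ s → ‖Sem ((n : ℝ) * t₀ + s)‖ ≤ M₁ * (1 / 2) ^ n := by
    intro n
    induction n with
    | zero =>
      intro s hs
      have h0 : ((0:ℕ):ℝ) * t₀ + s = s := by norm_num
      rw [h0, pow_zero, mul_one]
      exact (hbdall s hs).trans (le_max_left _ _)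
    | succ n ih =>
      intro s hs
      have hnts : (0:ℝ) ≤ (n : ℝ) * t₀ + s :=
        add_nonneg (mul_nonneg (Nat.cast_nonneg n) ht₀pos.le) hs
      have key : ((n + 1 : ℕ) : ℝ) * t₀ + s = ((n : ℝ) * t₀ + s) + t₀ := by
        push_cast; ring
      rw [key, hSemAdd t₀ ((n : ℝ) * t₀ + s) ht₀pos.le hnts]
      calc ‖(Sem ((n : ℝ) * t₀ + s)).comp (Sem t₀)‖
          ≤ ‖Sem ((n : ℝ) * t₀ + s)‖ * ‖Sem t₀‖ := ContinuousLinearMap.opNorm_comp_le _ _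
        _ ≤ (M₁ * (1 / 2) ^ n) * (1 / 2) :=
            mul_le_mul (ih s hs) hSemt₀ (norm_nonneg _) (by positivity)
        _ = M₁ * (1 / 2) ^ (n + 1) := by ring
  -- conclude exponential stability, contradiction
  apply hSemNotExp
  have hlog2 : (0:ℝ) < Real.log 2 := Real.log_pos (by norm_num)
  refine ⟨2 * M₁, Real.log 2 / t₀, by linarith, div_pos hlog2 ht₀pos, fun t ht => ?_⟩
  set n : ℕ := ⌊t / t₀⌋₊ with hn
  have hn1 : (n : ℝ) * t₀ ≤ t := by
    have h1 : (n : ℝ) ≤ t / t₀ := Nat.floor_le (div_nonneg ht ht₀pos.le)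
    calc (n : ℝ) * t₀ ≤ (t / t₀) * t₀ := mul_le_mul_of_nonneg_right h1 ht₀pos.le
      _ = t := div_mul_cancel₀ t ht₀pos.ne'
  have hn2 : t / t₀ < (n : ℝ) + 1 := Nat.lt_floor_add_one _
  have hs : 0 ≤ t - (n : ℝ) * t₀ := by linarith
  have h := hind n (t - (n : ℝ) * t₀) hs
  rw [show (n : ℝ) * t₀ + (t - (n : ℝ) * t₀) = t by ring] at h
  -- (1/2)^n ≤ 2 * exp(-(log 2 / t₀) * t)
  have hhalf : ((1:ℝ) / 2) ^ n = Real.exp (-((n : ℝ) * Real.log 2)) := by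
    rw [Real.exp_neg, Real.exp_nat_mul, Real.exp_log (by norm_num : (0:ℝ) < 2),
      ← inv_pow, one_div]
  have hexp : Real.exp (-((n : ℝ) * Real.log 2)) ≤
      2 * Real.exp (-(Real.log 2 / t₀) * t) := by
    have h2 : (2:ℝ) * Real.exp (-(Real.log 2 / t₀) * t) =
        Real.exp (Real.log 2 + -(Real.log 2 / t₀) * t) := by
      rw [Real.exp_add, Real.exp_log (by norm_num : (0:ℝ) < 2)]
    rw [h2]
    apply Real.exp_le_exp.2
    have h3 : Real.log 2 / t₀ * t = Real.log 2 * (t / t₀) := by ring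
    have h4 : Real.log 2 * (t / t₀) ≤ Real.log 2 * ((n : ℝ) + 1) :=
      mul_le_mul_of_nonneg_left hn2.le hlog2.le
    have h6 : Real.log 2 * ((n : ℝ) + 1) = Real.log 2 * (n : ℝ) + Real.log 2 := by ring
    linarith
  have hfin : M₁ * ((1:ℝ) / 2) ^ n ≤ 2 * M₁ * Real.exp (-(Real.log 2 / t₀) * t) := by
    rw [hhalf]
    have hpos : 0 < Real.exp (-((n : ℝ) * Real.log 2)) := Real.exp_pos _
    nlinarith [hexp, hM₁ge, hpos]
  linarith
end
end
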